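/- arXiv:0801.4851 — 10 statements merged into one kernel-verified Lean document; each statement's English description precedes it below -/
import Mathlib

section
/- In any max game, if a greedy move by some player takes a routing p to a new routing p', then M(p') < M(p) in the total order on routing vectors. -/
open Finset

/-- A routing game: a finite set of players `Fin N`, a graph `G` on the finite
vertex type `V`, and for each player a nonempty finite strategy set of paths
(trails of length at least 1) joining its source to its destination. -/
structure RoutingGame (V : Type) [Fintype V] [DecidableEq V] where
  /-- the underlying graph -/
  G : SimpleGraph V
  /-- the number of players -/
  N : ℕ
  Npos : 0 < N
  /-- the source of each player -/
  src : Fin N → V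
  /-- the destination of each player -/
  dst : Fin N → V
  src_ne_dst : ∀ i, src i ≠ dst i
  /-- the strategy set of each player -/
  strat : ∀ i : Fin N, Finset (G.Walk (src i) (dst i))
  strat_nonempty : ∀ i, (strat i).Nonempty
  strat_trail : ∀ i, ∀ q ∈ strat i, q.IsTrail
  strat_len : ∀ i, ∀ q ∈ strat i, 1 ≤ q.length

namespace RoutingGame

variable {V : Type} [Fintype V] [DecidableEq V] (R : RoutingGame V)

/-- A routing assigns to each player a walk from its source to its destination. -/
abbrev Routing := ∀ i : Fin R.N, R.G.Walk (R.src i) (R.dst i)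

/-- `p` is a valid routing if every player's path belongs to its strategy set. -/
def IsRouting (p : R.Routing) : Prop := ∀ i, p i ∈ R.strat i

/-- The edge congestion `C_e(p)`: the number of players whose path uses `e`. -/
def edgeCong (p : R.Routing) (e : Sym2 V) : ℕ :=
  (Finset.univ.filter fun i => e ∈ (p i).edges).card

/-- The path congestion `C_i(p)` of player `i`. -/
def pathCong (p : R.Routing) (i : Fin R.N) : ℕ :=
  (p i).edges.toFinset.sup (R.edgeCong p)

/-- The network congestion `C(p)`. -/
def netCong (p : R.Routing) : ℕ :=
  Finset.univ.sup (R.edgeCong p)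

/-- The maximum path length `D(p)`. -/
def maxLen (p : R.Routing) : ℕ :=
  Finset.univ.sup fun i => (p i).length

/-- The longest path length `L` over all strategy sets. -/
def Lmax : ℕ :=
  Finset.univ.sup fun i : Fin R.N => (R.strat i).sup fun q => q.length

/-- Player cost in the max game: `pc_i(p) = max (C_i(p)) (D_i(p))`. -/
def pcMax (p : R.Routing) (i : Fin R.N) : ℕ :=
  max (R.pathCong p i) (p i).length

/-- Social cost in the max game: `SC(p) = max (C(p)) (D(p))`. -/
def SCMax (p : R.Routing) : ℕ := max (R.netCong p) (R.maxLen p)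

/-- A Nash-routing of the max game: a routing in which every player is locally
optimal. -/
def NashMax (p : R.Routing) : Prop :=
  R.IsRouting p ∧
    ∀ i, ∀ q ∈ R.strat i, R.pcMax p i ≤ R.pcMax (Function.update p i q) i

/-- A greedy move in the max game takes `p` to `p'` by letting a single player
switch to a strictly cheaper path in its strategy set. -/
def GreedyMoveMax (p p' : R.Routing) : Prop :=
  ∃ i, ∃ q ∈ R.strat i,
    p' = Function.update p i q ∧ R.pcMax p' i < R.pcMax p i

/-- The entry `m_k(p)` of the routing vector of the max game: the number of
players with path congestion `k` plus the number of players with path length `k`. -/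
def mvecMax (p : R.Routing) (k : ℕ) : ℕ :=
  (Finset.univ.filter fun i => R.pathCong p i = k).card +
    (Finset.univ.filter fun i => (p i).length = k).card

/-- The strict order on routing vectors (max game): `M(p') < M(p)` iff the
vectors agree above some index `j` and the entry of `p'` at `j` is smaller. -/
def MLtMax (p' p : R.Routing) : Prop :=
  ∃ j : ℕ, (∀ k, j < k → R.mvecMax p' k = R.mvecMax p k) ∧
    R.mvecMax p' j < R.mvecMax p j

lemma pathCong_le_aux (R : RoutingGame V) (p p' : R.Routing) (i : Fin R.N)
    (hupd : ∀ j, j ≠ i → p' j = p j) (j : Fin R.N) :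
    R.pathCong p' j ≤ max (R.pathCong p j) (R.pathCong p' i) := by
  apply Finset.sup_le
  intro e he
  rw [List.mem_toFinset] at he
  by_cases hei : e ∈ (p' i).edges
  · exact le_max_of_le_right (Finset.le_sup (List.mem_toFinset.mpr hei))
  · have hji : j ≠ i := by rintro rfl; exact hei he
    have hpe : e ∈ (p j).edges := by rw [← hupd j hji]; exact he
    refine le_max_of_le_left (le_trans ?_ (Finset.le_sup (List.mem_toFinset.mpr hpe)))
    apply Finset.card_le_card
    intro x hx
    simp only [Finset.mem_filter, Finset.mem_univ, true_and] at hx ⊢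
    by_cases hxi : x = i
    · subst hxi; exact absurd hx hei
    · rw [← hupd x hxi]; exact hx

/-- In any max game, if a greedy move by some player takes a
routing `p` to a new routing `p'`, then `M(p') < M(p)` in the total order on
routing vectors. -/
theorem max_greedy_decreases_vector (R : RoutingGame V) (p p' : R.Routing)
    (hp : R.IsRouting p) (h : R.GreedyMoveMax p p') :
    R.MLtMax p' p := by
  obtain ⟨i, q, hq, hp'eq, hlt⟩ := h
  have hupd : ∀ j, j ≠ i → p' j = p j := by
    intro j hj; rw [hp'eq]; exact Function.update_of_ne hj _ _
  have hC1 := R.pathCong_le_aux p p' i hupd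
  have hC2 := R.pathCong_le_aux p' p i (fun j hj => (hupd j hj).symm)
  set c := R.pcMax p i with hc
  have hci : R.pathCong p i ≤ c := le_max_left _ _
  have hdi : (p i).length ≤ c := le_max_right _ _
  have hc_eq : R.pathCong p i = c ∨ (p i).length = c := by
    rcases max_choice (R.pathCong p i) ((p i).length) with h' | h'
    · left; exact h'.symm
    · right; exact h'.symm
  have hci' : R.pathCong p' i < c := lt_of_le_of_lt (le_max_left _ _) hlt
  have hdi' : (p' i).length < c := lt_of_le_of_lt (le_max_right _ _) hlt
  refine ⟨c, ?_, ?_⟩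
  · intro k hk
    unfold mvecMax
    have e1 : (Finset.univ.filter fun j => R.pathCong p' j = k) =
        (Finset.univ.filter fun j => R.pathCong p j = k) := by
      ext j
      simp only [Finset.mem_filter, Finset.mem_univ, true_and]
      have h1 := le_max_iff.mp (hC1 j)
      have h2 := le_max_iff.mp (hC2 j)
      omega
    have e2 : (Finset.univ.filter fun j => (p' j).length = k) =
        (Finset.univ.filter fun j => (p j).length = k) := by
      ext j
      simp only [Finset.mem_filter, Finset.mem_univ, true_and]
      by_cases hj : j = i
      · subst hj; omega
      · rw [hupd j hj]
    rw [e1, e2]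
  · unfold mvecMax
    have hA : (Finset.univ.filter fun j => R.pathCong p' j = c) ⊆
        (Finset.univ.filter fun j => R.pathCong p j = c) := by
      intro j hj
      simp only [Finset.mem_filter, Finset.mem_univ, true_and] at hj ⊢
      have h1 := le_max_iff.mp (hC1 j)
      have h2 := le_max_iff.mp (hC2 j)
      omega
    have hB : (Finset.univ.filter fun j => (p' j).length = c) ⊆
        (Finset.univ.filter fun j => (p j).length = c) := by
      intro j hj
      simp only [Finset.mem_filter, Finset.mem_univ, true_and] at hj ⊢
      by_cases hjj : j = i
      · subst hjj; omega
      · rw [← hupd j hjj]; exact hj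
    have hiA' : i ∉ (Finset.univ.filter fun j => R.pathCong p' j = c) := by
      simp only [Finset.mem_filter, Finset.mem_univ, true_and]; omega
    have hiB' : i ∉ (Finset.univ.filter fun j => (p' j).length = c) := by
      simp only [Finset.mem_filter, Finset.mem_univ, true_and]; omega
    rcases hc_eq with hceq | hceq
    · have hiA : i ∈ (Finset.univ.filter fun j => R.pathCong p j = c) := by
        simp only [Finset.mem_filter, Finset.mem_univ, true_and]; exact hceq
      have h1 := Finset.card_le_card (Finset.subset_erase.mpr ⟨hA, hiA'⟩)
      rw [Finset.card_erase_of_mem hiA] at h1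
      have h2 := Finset.card_le_card hB
      have h3 : 0 < (Finset.univ.filter fun j => R.pathCong p j = c).card :=
        Finset.card_pos.mpr ⟨i, hiA⟩
      omega
    · have hiB : i ∈ (Finset.univ.filter fun j => (p j).length = c) := by
        simp only [Finset.mem_filter, Finset.mem_univ, true_and]; exact hceq
      have h1 := Finset.card_le_card (Finset.subset_erase.mpr ⟨hB, hiB'⟩)
      rw [Finset.card_erase_of_mem hiB] at h1
      have h2 := Finset.card_le_card hA
      have h3 : 0 < (Finset.univ.filter fun j => (p j).length = c).card :=
        Finset.card_pos.mpr ⟨i, hiB⟩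
      omega

end RoutingGame
end

section
/- In any max game, every sequence of routings in which each routing is obtained from the previous one by a greedy move of a single player is finite; consequently, every max game possesses at least one Nash-routing, and best-response dynamics from any initial routing reach a Nash-routing in finitely many steps. -/
open Finset

namespace RoutingGame

variable {V : Type} [Fintype V] [DecidableEq V] (R : RoutingGame V)

lemma le_pathCong {p : R.Routing} {j : Fin R.N} {e : Sym2 V}
    (h : e ∈ (p j).edges) : R.edgeCong p e ≤ R.pathCong p j :=
  Finset.le_sup (List.mem_toFinset.mpr h)

lemma edgeCong_update_le (p : R.Routing) (i : Fin R.N)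
    (q : R.G.Walk (R.src i) (R.dst i)) {e : Sym2 V} (he : e ∉ q.edges) :
    R.edgeCong (Function.update p i q) e ≤ R.edgeCong p e := by
  apply Finset.card_le_card
  intro j hj
  simp only [Finset.mem_filter, Finset.mem_univ, true_and] at hj ⊢
  by_cases hji : j = i
  · subst hji; rw [Function.update_self] at hj; exact absurd hj he
  · rwa [Function.update_of_ne hji] at hj

lemma pathCong_update_le (p : R.Routing) (i : Fin R.N)
    (q : R.G.Walk (R.src i) (R.dst i)) (j : Fin R.N) :
    R.pathCong (Function.update p i q) j ≤
      max (R.pathCong p j) (R.pathCong (Function.update p i q) i) := by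
  by_cases hji : j = i
  · subst hji; exact le_max_right _ _
  · set p' := Function.update p i q with hp'
    have hpj : p' j = p j := Function.update_of_ne hji _ _
    show (p' j).edges.toFinset.sup (R.edgeCong p') ≤ _
    rw [hpj]
    apply Finset.sup_le
    intro e he
    rw [List.mem_toFinset] at he
    by_cases heq : e ∈ q.edges
    · refine le_trans ?_ (le_max_right _ _)
      exact R.le_pathCong (j := i) (by rw [hp', Function.update_self]; exact heq)
    · exact le_trans (le_trans (R.edgeCong_update_le p i q heq) (R.le_pathCong he))
        (le_max_left _ _)

/-- The potential function: strictly decreases under greedy moves. -/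
def pot (p : R.Routing) : ℕ :=
  ∑ i : Fin R.N, ((2 * R.N + 1) ^ R.pathCong p i + (2 * R.N + 1) ^ (p i).length)

lemma pot_lt_of_greedy {p p' : R.Routing} (h : R.GreedyMoveMax p p') :
    R.pot p' < R.pot p := by
  obtain ⟨i, q, hq, rfl, hlt⟩ := h
  set B := 2 * R.N + 1 with hB
  set p' := Function.update p i q with hp'
  set c' := R.pcMax p' i with hc'
  have hB1 : 1 ≤ B := by omega
  have hpci : R.pathCong p' i ≤ c' := le_max_left _ _
  have hleni : (p' i).length ≤ c' := le_max_right _ _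
  have hterm : ∀ j ∈ Finset.univ.erase i,
      B ^ R.pathCong p' j + B ^ (p' j).length ≤
      (B ^ R.pathCong p j + B ^ (p j).length) + B ^ c' := by
    intro j hj
    have hji : j ≠ i := Finset.ne_of_mem_erase hj
    have h1 : R.pathCong p' j ≤ max (R.pathCong p j) c' :=
      le_trans (R.pathCong_update_le p i q j) (max_le_max le_rfl hpci)
    have h2 : (p' j).length = (p j).length := by rw [hp', Function.update_of_ne hji]
    have h3 : B ^ R.pathCong p' j ≤ B ^ R.pathCong p j + B ^ c' := by
      rcases max_cases (R.pathCong p j) c' with ⟨hm, _⟩ | ⟨hm, _⟩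
      · exact le_trans (Nat.pow_le_pow_right hB1 (hm ▸ h1)) (Nat.le_add_right _ _)
      · exact le_trans (Nat.pow_le_pow_right hB1 (hm ▸ h1)) (Nat.le_add_left _ _)
    rw [h2]; linarith
  have hsum : ∑ j ∈ Finset.univ.erase i, (B ^ R.pathCong p' j + B ^ (p' j).length)
      ≤ (∑ j ∈ Finset.univ.erase i, (B ^ R.pathCong p j + B ^ (p j).length))
        + (R.N - 1) * B ^ c' := by
    calc ∑ j ∈ Finset.univ.erase i, (B ^ R.pathCong p' j + B ^ (p' j).length)
        ≤ ∑ j ∈ Finset.univ.erase i,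
            ((B ^ R.pathCong p j + B ^ (p j).length) + B ^ c') :=
          Finset.sum_le_sum hterm
      _ = (∑ j ∈ Finset.univ.erase i, (B ^ R.pathCong p j + B ^ (p j).length))
            + (R.N - 1) * B ^ c' := by
          rw [Finset.sum_add_distrib, Finset.sum_const, smul_eq_mul,
            Finset.card_erase_of_mem (Finset.mem_univ i), Finset.card_univ,
            Fintype.card_fin]
  have hpp' : R.pot p' = (∑ j ∈ Finset.univ.erase i,
      (B ^ R.pathCong p' j + B ^ (p' j).length))
      + (B ^ R.pathCong p' i + B ^ (p' i).length) :=
    (Finset.sum_erase_add _ _ (Finset.mem_univ i)).symm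
  have hpp : R.pot p = (∑ j ∈ Finset.univ.erase i,
      (B ^ R.pathCong p j + B ^ (p j).length))
      + (B ^ R.pathCong p i + B ^ (p i).length) :=
    (Finset.sum_erase_add _ _ (Finset.mem_univ i)).symm
  have hti : B ^ R.pathCong p' i + B ^ (p' i).length ≤ B ^ c' + B ^ c' :=
    Nat.add_le_add (Nat.pow_le_pow_right hB1 hpci) (Nat.pow_le_pow_right hB1 hleni)
  have htpi : B ^ (c' + 1) ≤ B ^ R.pathCong p i + B ^ (p i).length := by
    have hcc : c' + 1 ≤ R.pcMax p i := hlt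
    have h4 : B ^ (c' + 1) ≤ B ^ R.pcMax p i := Nat.pow_le_pow_right hB1 hcc
    rcases max_cases (R.pathCong p i) ((p i).length) with ⟨hm, _⟩ | ⟨hm, _⟩ <;>
      rw [pcMax, hm] at h4
    · exact le_trans h4 (Nat.le_add_right _ _)
    · exact le_trans h4 (Nat.le_add_left _ _)
  have hpow : B ^ (c' + 1) = B * B ^ c' := by rw [pow_succ, Nat.mul_comm]
  have hKpos : 1 ≤ B ^ c' := Nat.one_le_pow _ _ (by omega)
  have hN1 : 1 ≤ R.N := R.Npos
  rw [hpp, hpp']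
  have key : (R.N - 1) * B ^ c' + (B ^ c' + B ^ c') < B * B ^ c' := by
    have : (R.N - 1) * B ^ c' + (B ^ c' + B ^ c') = (R.N + 1) * B ^ c' := by
      have : R.N - 1 + 2 = R.N + 1 := by omega
      nlinarith [this]
    rw [this, hB]
    have : R.N + 1 < 2 * R.N + 1 := by omega
    exact Nat.mul_lt_mul_of_pos_right this hKpos
  rw [hpow] at htpi
  linarith

lemma reach_aux : ∀ n (p₀ : R.Routing), R.pot p₀ ≤ n → R.IsRouting p₀ →
    ∃ (T : ℕ) (f : ℕ → R.Routing), f 0 = p₀ ∧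
      (∀ t < T, R.GreedyMoveMax (f t) (f (t + 1))) ∧ R.NashMax (f T) := by
  intro n
  induction n with
  | zero =>
    intro p₀ hpot hroute
    by_cases h : R.NashMax p₀
    · exact ⟨0, fun _ => p₀, rfl, fun t ht => absurd ht (by omega), h⟩
    · exfalso
      have h2 : ¬ ∀ i, ∀ q ∈ R.strat i,
          R.pcMax p₀ i ≤ R.pcMax (Function.update p₀ i q) i :=
        fun hall => h ⟨hroute, hall⟩
      push_neg at h2
      obtain ⟨i, q, hq, hlt⟩ := h2
      have hg : R.GreedyMoveMax p₀ (Function.update p₀ i q) := ⟨i, q, hq, rfl, hlt⟩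
      have := R.pot_lt_of_greedy hg
      omega
  | succ n ih =>
    intro p₀ hpot hroute
    by_cases h : R.NashMax p₀
    · exact ⟨0, fun _ => p₀, rfl, fun t ht => absurd ht (by omega), h⟩
    · have h2 : ¬ ∀ i, ∀ q ∈ R.strat i,
          R.pcMax p₀ i ≤ R.pcMax (Function.update p₀ i q) i :=
        fun hall => h ⟨hroute, hall⟩
      push_neg at h2
      obtain ⟨i, q, hq, hlt⟩ := h2
      have hg : R.GreedyMoveMax p₀ (Function.update p₀ i q) := ⟨i, q, hq, rfl, hlt⟩
      set p₁ := Function.update p₀ i q with hp₁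
      have hr₁ : R.IsRouting p₁ := by
        intro j; by_cases hji : j = i
        · subst hji; rw [hp₁, Function.update_self]; exact hq
        · rw [hp₁, Function.update_of_ne hji]; exact hroute j
      have hpot₁ : R.pot p₁ ≤ n := by
        have := R.pot_lt_of_greedy hg; omega
      obtain ⟨T, f, hf0, hfg, hfN⟩ := ih p₁ hpot₁ hr₁
      refine ⟨T + 1, fun t => Nat.casesOn t p₀ f, rfl, ?_, hfN⟩
      intro t ht
      cases t with
      | zero => show R.GreedyMoveMax p₀ (f 0); rw [hf0]; exact hg
      | succ s => exact hfg s (by omega)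

/-- In any max game, every sequence of routings in which each
routing is obtained from the previous one by a greedy move of a single player
is finite; consequently, every max game possesses at least one Nash-routing,
and best-response dynamics from any initial routing reach a Nash-routing in
finitely many steps. -/
theorem max_game_converges (R : RoutingGame V) :
    (¬ ∃ f : ℕ → R.Routing, R.IsRouting (f 0) ∧
        ∀ t, R.GreedyMoveMax (f t) (f (t + 1))) ∧
    (∃ p : R.Routing, R.NashMax p) ∧
    (∀ p₀ : R.Routing, R.IsRouting p₀ →
      ∃ (T : ℕ) (f : ℕ → R.Routing), f 0 = p₀ ∧
        (∀ t < T, R.GreedyMoveMax (f t) (f (t + 1))) ∧ R.NashMax (f T)) := by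
  refine ⟨?_, ?_, ?_⟩
  · rintro ⟨f, -, hf⟩
    have hdec : ∀ t, R.pot (f (t + 1)) < R.pot (f t) :=
      fun t => R.pot_lt_of_greedy (hf t)
    have hbound : ∀ t, R.pot (f t) + t ≤ R.pot (f 0) := by
      intro t
      induction t with
      | zero => omega
      | succ s ihs => have := hdec s; omega
    have := hbound (R.pot (f 0) + 1); omega
  · set p₀ : R.Routing := fun i => (R.strat_nonempty i).choose with hp
    have hr : R.IsRouting p₀ := fun i => (R.strat_nonempty i).choose_spec
    obtain ⟨T, f, -, -, hN⟩ := R.reach_aux (R.pot p₀) p₀ le_rfl hr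
    exact ⟨f T, hN⟩
  · intro p₀ h
    exact R.reach_aux (R.pot p₀) p₀ le_rfl h

end RoutingGame
end

section
/- In any max game the price of stability equals 1: there exists a Nash-routing p whose social cost SC(p) = max(C(p), D(p)) equals the minimum of SC(p') over all routings p'. -/
open Finset

namespace RoutingGame

variable {V : Type} [Fintype V] [DecidableEq V] (R : RoutingGame V)

/-- The exponential potential of a routing. -/
def Phi (p : R.Routing) : ℕ := ∑ i, (R.N + 1) ^ (R.pcMax p i)

lemma edgeCong_le_netCong (p : R.Routing) (e : Sym2 V) :
    R.edgeCong p e ≤ R.netCong p :=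
  Finset.le_sup (Finset.mem_univ e)

lemma pathCong_le_netCong (p : R.Routing) (i : Fin R.N) :
    R.pathCong p i ≤ R.netCong p :=
  Finset.sup_le fun e _ => R.edgeCong_le_netCong p e

lemma len_le_maxLen (p : R.Routing) (i : Fin R.N) :
    (p i).length ≤ R.maxLen p :=
  Finset.le_sup (f := fun i => (p i).length) (Finset.mem_univ i)

lemma pcMax_le_SCMax (p : R.Routing) (i : Fin R.N) :
    R.pcMax p i ≤ R.SCMax p :=
  max_le_max (R.pathCong_le_netCong p i) (R.len_le_maxLen p i)

lemma edgeCong_update_le_of_not_mem (p : R.Routing) (i : Fin R.N)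
    (q : R.G.Walk (R.src i) (R.dst i)) (e : Sym2 V) (he : e ∉ q.edges) :
    R.edgeCong (Function.update p i q) e ≤ R.edgeCong p e := by
  apply Finset.card_le_card
  intro j hj
  simp only [Finset.mem_filter, Finset.mem_univ, true_and] at hj ⊢
  rcases eq_or_ne j i with rfl | hji
  · rw [Function.update_self] at hj; exact absurd hj he
  · rwa [Function.update_of_ne hji] at hj

lemma edgeCong_update_le_pathCong (p : R.Routing) (i : Fin R.N)
    (q : R.G.Walk (R.src i) (R.dst i)) (e : Sym2 V) (he : e ∈ q.edges) :
    R.edgeCong (Function.update p i q) e ≤ R.pathCong (Function.update p i q) i := by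
  apply Finset.le_sup
  rw [List.mem_toFinset, Function.update_self]
  exact he

lemma greedy_SC_le (p : R.Routing) (i : Fin R.N)
    (q : R.G.Walk (R.src i) (R.dst i))
    (hlt : R.pcMax (Function.update p i q) i < R.pcMax p i) :
    R.SCMax (Function.update p i q) ≤ R.SCMax p := by
  set p' := Function.update p i q with hp'
  have hpc' : R.pcMax p' i ≤ R.SCMax p :=
    le_of_lt (lt_of_lt_of_le hlt (R.pcMax_le_SCMax p i))
  apply max_le
  · apply Finset.sup_le
    intro e _
    by_cases he : e ∈ q.edges
    · exact le_trans (le_trans (R.edgeCong_update_le_pathCong p i q e he)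
        (le_max_left _ _)) hpc'
    · exact le_trans (le_trans (R.edgeCong_update_le_of_not_mem p i q e he)
        (R.edgeCong_le_netCong p e)) (le_max_left _ _)
  · apply Finset.sup_le
    intro j _
    rcases eq_or_ne j i with rfl | hji
    · exact le_trans (le_trans (le_max_right _ _) (le_refl (R.pcMax p' j))) hpc'
    · have : p' j = p j := Function.update_of_ne hji _ _
      rw [this]
      exact le_trans (R.len_le_maxLen p j) (le_max_right _ _)

lemma greedy_pc_other (p : R.Routing) (i : Fin R.N)
    (q : R.G.Walk (R.src i) (R.dst i)) (j : Fin R.N) (hji : j ≠ i) :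
    R.pcMax (Function.update p i q) j ≤
      max (R.pcMax p j) (R.pcMax (Function.update p i q) i) := by
  set p' := Function.update p i q with hp'
  have hpj : p' j = p j := Function.update_of_ne hji _ _
  have hpath : R.pathCong p' j ≤ max (R.pathCong p j) (R.pcMax p' i) := by
    unfold pathCong
    rw [hpj]
    apply Finset.sup_le
    intro e he
    rw [List.mem_toFinset] at he
    by_cases heq : e ∈ q.edges
    · exact le_trans (le_trans (R.edgeCong_update_le_pathCong p i q e heq)
        (le_max_left _ _)) (le_max_right _ _)
    · exact le_trans (le_trans (R.edgeCong_update_le_of_not_mem p i q e heq)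
        (Finset.le_sup (List.mem_toFinset.mpr he))) (le_max_left _ _)
  unfold pcMax
  rw [hpj]
  apply max_le
  · exact le_trans hpath (max_le_max (le_max_left _ _) le_rfl)
  · exact le_trans (le_max_right (R.pathCong p j) _) (le_max_left _ _)

lemma greedy_Phi_lt (p : R.Routing) (hp : R.IsRouting p) (i : Fin R.N)
    (q : R.G.Walk (R.src i) (R.dst i))
    (hlt : R.pcMax (Function.update p i q) i < R.pcMax p i) :
    R.Phi (Function.update p i q) < R.Phi p := by
  set p' := Function.update p i q with hp'
  set B := R.N + 1 with hB
  set c := R.pcMax p i with hc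
  set c' := R.pcMax p' i with hc'
  have hc1 : 1 ≤ c := le_trans (R.strat_len i (p i) (hp i)) (le_max_right _ _)
  have hsum : ∀ j ∈ Finset.univ.erase i,
      B ^ (R.pcMax p' j) ≤ B ^ (R.pcMax p j) + B ^ c' := by
    intro j hj
    have hji : j ≠ i := (Finset.mem_erase.mp hj).1
    have := R.greedy_pc_other p i q j hji
    calc B ^ (R.pcMax p' j) ≤ B ^ (max (R.pcMax p j) c') :=
          Nat.pow_le_pow_right (Nat.succ_le_succ (Nat.zero_le _)) this
      _ ≤ B ^ (R.pcMax p j) + B ^ c' := by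
          rcases max_cases (R.pcMax p j) c' with ⟨h1, _⟩ | ⟨h1, _⟩ <;>
            rw [h1] <;> omega
  have key : R.N * B ^ c' < B ^ c := by
    have h1 : B ^ c' ≤ B ^ (c - 1) :=
      Nat.pow_le_pow_right (Nat.succ_le_succ (Nat.zero_le _)) (by omega)
    have h2 : R.N * B ^ (c - 1) < B * B ^ (c - 1) := by
      have : 0 < B ^ (c - 1) := Nat.pow_pos (Nat.succ_pos _)
      have hNB : R.N < B := by omega
      exact Nat.mul_lt_mul_of_lt_of_le hNB le_rfl this
    have h3 : B * B ^ (c - 1) = B ^ c := by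
      rw [← pow_succ']
      congr 1
      omega
    calc R.N * B ^ c' ≤ R.N * B ^ (c - 1) := Nat.mul_le_mul_left _ h1
      _ < B * B ^ (c - 1) := h2
      _ = B ^ c := h3
  have hsplit : ∀ r : R.Routing,
      R.Phi r = (∑ j ∈ Finset.univ.erase i, B ^ (R.pcMax r j)) + B ^ (R.pcMax r i) := by
    intro r
    rw [Finset.sum_erase_add _ _ (Finset.mem_univ i)]
    rfl
  rw [hsplit p, hsplit p']
  have hbound : (∑ j ∈ Finset.univ.erase i, B ^ (R.pcMax p' j))
      ≤ (∑ j ∈ Finset.univ.erase i, B ^ (R.pcMax p j)) + (R.N - 1) * B ^ c' := by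
    calc (∑ j ∈ Finset.univ.erase i, B ^ (R.pcMax p' j))
        ≤ ∑ j ∈ Finset.univ.erase i, (B ^ (R.pcMax p j) + B ^ c') :=
          Finset.sum_le_sum hsum
      _ = (∑ j ∈ Finset.univ.erase i, B ^ (R.pcMax p j))
            + (Finset.univ.erase i).card * B ^ c' := by
          rw [Finset.sum_add_distrib, Finset.sum_const, smul_eq_mul]
      _ = _ := by
          rw [Finset.card_erase_of_mem (Finset.mem_univ i), Finset.card_univ,
            Fintype.card_fin]
  have hN1 : 1 ≤ R.N := R.Npos
  have hcc : B ^ c' + (R.N - 1) * B ^ c' = R.N * B ^ c' := by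
    have : 1 * B ^ c' + (R.N - 1) * B ^ c' = R.N * B ^ c' := by
      rw [← Nat.add_mul]; congr 1; omega
    simpa using this
  rw [← hcc] at key
  have e1 : B ^ R.pcMax p' i = B ^ c' := rfl
  have e2 : B ^ R.pcMax p i = B ^ c := rfl
  omega

/-- In any max game the price of stability equals 1: there exists
a Nash-routing `p` whose social cost `SC(p) = max (C(p)) (D(p))` equals the
minimum of `SC(p')` over all routings `p'`. -/
theorem max_game_price_of_stability_one (R : RoutingGame V) :
    ∃ p : R.Routing, R.NashMax p ∧
      ∀ p' : R.Routing, R.IsRouting p' → R.SCMax p ≤ R.SCMax p' := by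
  classical
  have h0 : ∃ p : R.Routing, R.IsRouting p :=
    ⟨fun i => (R.strat_nonempty i).choose, fun i => (R.strat_nonempty i).choose_spec⟩
  set S1 : Set ℕ := {n | ∃ p : R.Routing, R.IsRouting p ∧ R.SCMax p = n} with hS1
  have hS1ne : S1.Nonempty := by
    obtain ⟨p0, hp0⟩ := h0
    exact ⟨R.SCMax p0, p0, hp0, rfl⟩
  set m := sInf S1 with hm
  have hmS1 : m ∈ S1 := Nat.sInf_mem hS1ne
  set S2 : Set ℕ :=
    {n | ∃ p : R.Routing, R.IsRouting p ∧ R.SCMax p = m ∧ R.Phi p = n} with hS2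
  have hS2ne : S2.Nonempty := by
    obtain ⟨p0, hp0, hsc⟩ := hmS1
    exact ⟨R.Phi p0, p0, hp0, hsc, rfl⟩
  obtain ⟨p, hp, hscp, hphip⟩ := Nat.sInf_mem hS2ne
  have hmin : ∀ p' : R.Routing, R.IsRouting p' → m ≤ R.SCMax p' := by
    intro p' hp'
    exact Nat.sInf_le ⟨p', hp', rfl⟩
  refine ⟨p, ⟨hp, ?_⟩, fun p' hp' => hscp ▸ hmin p' hp'⟩
  intro i q hq
  by_contra hcon
  push_neg at hcon
  set p' := Function.update p i q with hp'def
  have hp'rout : R.IsRouting p' := by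
    intro j
    rw [hp'def]
    rcases eq_or_ne j i with rfl | hji
    · rw [Function.update_self]; exact hq
    · rw [Function.update_of_ne hji]; exact hp j
  have hsc' : R.SCMax p' = m := by
    have h1 : R.SCMax p' ≤ m := hscp ▸ R.greedy_SC_le p i q hcon
    exact le_antisymm h1 (hmin p' hp'rout)
  have hphi' : R.Phi p' < R.Phi p := R.greedy_Phi_lt p hp i q hcon
  have : sInf S2 ≤ R.Phi p' := Nat.sInf_le ⟨p', hp'rout, hsc', rfl⟩
  omega

end RoutingGame
end

section
/- In any max game, if a routing p_min satisfies M(p_min) ≤ M(p) in the total order on routing vectors for every routing p, then p_min achieves the optimal social cost: SC(p_min) ≤ SC(p) for every routing p. -/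
open Finset

namespace RoutingGame

variable {V : Type} [Fintype V] [DecidableEq V] (R : RoutingGame V)

lemma scmax_eq_sup (R : RoutingGame V) (p : R.Routing) :
    R.SCMax p = Finset.univ.sup (R.pcMax p) := by
  apply le_antisymm
  · apply max_le
    · apply Finset.sup_le
      intro e _
      rcases Nat.eq_zero_or_pos (R.edgeCong p e) with h | h
      · rw [h]; exact Nat.zero_le _
      · have hex : ∃ i, e ∈ (p i).edges := by
          obtain ⟨i, hi⟩ := Finset.card_pos.mp h
          simp only [Finset.mem_filter, Finset.mem_univ, true_and] at hi
          exact ⟨i, hi⟩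
        obtain ⟨i, hi⟩ := hex
        calc R.edgeCong p e ≤ R.pathCong p i := by
              apply Finset.le_sup
              simpa using hi
          _ ≤ R.pcMax p i := le_max_left _ _
          _ ≤ _ := Finset.le_sup (Finset.mem_univ i)
    · apply Finset.sup_le
      intro i _
      calc (p i).length ≤ R.pcMax p i := le_max_right _ _
        _ ≤ _ := Finset.le_sup (Finset.mem_univ i)
  · apply Finset.sup_le
    intro i _
    apply max_le
    · exact le_max_of_le_left (Finset.sup_mono (Finset.subset_univ _))
    · exact le_max_of_le_right
        (Finset.le_sup (f := fun i => (p i).length) (Finset.mem_univ i))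

lemma mvec_sc_pos (R : RoutingGame V) (p : R.Routing) :
    0 < R.mvecMax p (R.SCMax p) := by
  have hne : (Finset.univ : Finset (Fin R.N)).Nonempty := by
    have : Nonempty (Fin R.N) := Fin.pos_iff_nonempty.mp R.Npos
    exact Finset.univ_nonempty
  obtain ⟨i, _, hi⟩ := Finset.exists_mem_eq_sup Finset.univ hne (R.pcMax p)
  have hsc : R.SCMax p = R.pcMax p i := by rw [scmax_eq_sup]; exact hi
  unfold mvecMax
  rcases max_choice (R.pathCong p i) ((p i).length) with h | h
  · apply Nat.add_pos_left
    rw [Finset.card_pos]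
    exact ⟨i, by simp [hsc, pcMax, h]⟩
  · apply Nat.add_pos_right
    rw [Finset.card_pos]
    exact ⟨i, by simp [hsc, pcMax, h]⟩

lemma mvec_pos_le_sc (R : RoutingGame V) (p : R.Routing) (k : ℕ)
    (h : 0 < R.mvecMax p k) : k ≤ R.SCMax p := by
  unfold mvecMax at h
  rw [scmax_eq_sup]
  rcases Nat.eq_zero_or_pos
      (Finset.univ.filter fun i => R.pathCong p i = k).card with h0 | h0
  · have h1 : 0 < (Finset.univ.filter fun i => (p i).length = k).card := by omega
    replace h1 := Finset.card_pos.mp h1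
    obtain ⟨i, hi⟩ := h1
    simp only [Finset.mem_filter, Finset.mem_univ, true_and] at hi
    calc k = (p i).length := hi.symm
      _ ≤ R.pcMax p i := le_max_right _ _
      _ ≤ _ := Finset.le_sup (Finset.mem_univ i)
  · replace h0 := Finset.card_pos.mp h0
    obtain ⟨i, hi⟩ := h0
    simp only [Finset.mem_filter, Finset.mem_univ, true_and] at hi
    calc k = R.pathCong p i := hi.symm
      _ ≤ R.pcMax p i := le_max_left _ _
      _ ≤ _ := Finset.le_sup (Finset.mem_univ i)

/-- In any max game, if a routing `pmin` satisfies
`M(pmin) ≤ M(p)` for every routing `p`, then `pmin` achieves the optimal social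
cost: `SC(pmin) ≤ SC(p)` for every routing `p`. -/
theorem max_minimum_vector_is_optimal (R : RoutingGame V) (pmin : R.Routing)
    (hmin : R.IsRouting pmin)
    (hle : ∀ p : R.Routing, R.IsRouting p →
      R.MLtMax pmin p ∨ ∀ k, R.mvecMax pmin k = R.mvecMax p k) :
    ∀ p : R.Routing, R.IsRouting p → R.SCMax pmin ≤ R.SCMax p := by
  intro p hp
  by_contra hlt
  push_neg at hlt
  have hs : 0 < R.mvecMax pmin (R.SCMax pmin) := mvec_sc_pos R pmin
  have hzero : ∀ k, R.SCMax pmin ≤ k → R.mvecMax p k = 0 := by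
    intro k hk
    by_contra h
    have := mvec_pos_le_sc R p k (Nat.pos_of_ne_zero h)
    omega
  rcases hle p hp with ⟨j, hagree, hj⟩ | heq
  · rcases lt_or_ge j (R.SCMax pmin) with hjs | hjs
    · have h1 := hagree (R.SCMax pmin) hjs
      have h2 := hzero (R.SCMax pmin) le_rfl
      omega
    · have := hzero j hjs
      omega
  · have h1 := heq (R.SCMax pmin)
    have h2 := hzero (R.SCMax pmin) le_rfl
    omega

end RoutingGame
end

section
/- Let p be a Nash-routing of a max game on a graph with n ≥ 2 vertices, let p* be any routing, and suppose C(p) ≥ D(p) + 2⌈log₂ n⌉ + 2. Let Z be the set of edges e with C_e(p) ≥ C(p) − 2⌈log₂ n⌉. Then there exists a nonempty set of edges X ⊆ Z such that |f(X)| ≤ 2|X|. -/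
open Finset

namespace RoutingGame

variable {V : Type} [Fintype V] [DecidableEq V] (R : RoutingGame V)

/-- `f(e) = ⋃_{i ∈ Π_e(p)} f(e,i)` where `f(e,i)` is the set of edges
`e' ∈ p*_i` with `C_{e'}(p) ≥ C_e(p) − 1`. -/
def fMax (p pstar : R.Routing) (e : Sym2 V) : Finset (Sym2 V) :=
  Finset.univ.filter fun e' => ∃ i : Fin R.N,
    e ∈ (p i).edges ∧ e' ∈ (pstar i).edges ∧
      R.edgeCong p e ≤ R.edgeCong p e' + 1

/-- `f(X) = ⋃_{e ∈ X} f(e)`. -/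
def fMaxSet (p pstar : R.Routing) (X : Finset (Sym2 V)) : Finset (Sym2 V) :=
  X.biUnion (R.fMax p pstar)

/-- Let `p` be a Nash-routing of a max game on a graph with
`n ≥ 2` vertices, let `p*` be any routing, and suppose
`C(p) ≥ D(p) + 2⌈log₂ n⌉ + 2`.  Let `Z` be the set of edges `e` with
`C_e(p) ≥ C(p) − 2⌈log₂ n⌉`.  Then there exists a nonempty set of edges
`X ⊆ Z` such that `|f(X)| ≤ 2|X|`. -/
theorem max_expansion (R : RoutingGame V) (p pstar : R.Routing)
    (hp : R.NashMax p) (hstar : R.IsRouting pstar)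
    (hn : 2 ≤ Fintype.card V)
    (hC : R.maxLen p + 2 * Nat.clog 2 (Fintype.card V) + 2 ≤ R.netCong p) :
    ∃ X : Finset (Sym2 V), X.Nonempty ∧
      (∀ e ∈ X, R.netCong p ≤ R.edgeCong p e + 2 * Nat.clog 2 (Fintype.card V)) ∧
      (R.fMaxSet p pstar X).card ≤ 2 * X.card := by
  classical
  by_contra hcon
  push_neg at hcon
  set K := 2 * Nat.clog 2 (Fintype.card V) with hKdef
  have hV : Nonempty V := Fintype.card_pos_iff.mp (by omega)
  have : Nonempty (Sym2 V) := ⟨Sym2.mk (Classical.arbitrary V) (Classical.arbitrary V)⟩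
  have huniv : (Finset.univ : Finset (Sym2 V)).Nonempty := Finset.univ_nonempty
  obtain ⟨e₀, -, he₀⟩ := Finset.exists_mem_eq_sup Finset.univ huniv (R.edgeCong p)
  have key : ∀ k, k ≤ K → ∃ X : Finset (Sym2 V), X.Nonempty ∧
      (∀ e ∈ X, R.netCong p ≤ R.edgeCong p e + k) ∧ 2 ^ k ≤ X.card := by
    intro k
    induction k with
    | zero =>
      intro _
      refine ⟨{e₀}, Finset.singleton_nonempty _, ?_, by simp⟩
      intro e he
      rw [Finset.mem_singleton] at he
      subst he
      simp [RoutingGame.netCong, ← he₀]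
    | succ k ih =>
      intro hk
      obtain ⟨X, hne, hZ, hcard⟩ := ih (by omega)
      have hZ' : ∀ e ∈ X, R.netCong p ≤ R.edgeCong p e + K := fun e he =>
        le_trans (hZ e he) (by omega)
      have hbig := hcon X hne hZ'
      refine ⟨X ∪ R.fMaxSet p pstar X, hne.mono Finset.subset_union_left, ?_, ?_⟩
      · intro e he
        rcases Finset.mem_union.mp he with h1 | h2
        · exact le_trans (hZ e h1) (by omega)
        · obtain ⟨e₁, he₁, hmem⟩ := Finset.mem_biUnion.mp h2
          rw [RoutingGame.fMax, Finset.mem_filter] at hmem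
          obtain ⟨-, i, hi1, hi2, hi3⟩ := hmem
          have := hZ e₁ he₁
          omega
      · calc 2 ^ (k + 1) = 2 * 2 ^ k := by ring
          _ ≤ 2 * X.card := by omega
          _ ≤ (R.fMaxSet p pstar X).card := le_of_lt hbig
          _ ≤ (X ∪ R.fMaxSet p pstar X).card :=
              Finset.card_le_card Finset.subset_union_right
  obtain ⟨X, hne, hZ, hcard⟩ := key K le_rfl
  have hbig := hcon X hne hZ
  have hsub : (R.fMaxSet p pstar X).card ≤ Fintype.card (Sym2 V) :=
    Finset.card_le_univ _
  have hsym : Fintype.card (Sym2 V) ≤ Fintype.card V * Fintype.card V := by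
    have hsurj : Function.Surjective (fun x : V × V => Sym2.mk x.1 x.2) := by
      intro z
      induction z using Sym2.ind with
      | _ a b => exact ⟨(a, b), rfl⟩
    calc Fintype.card (Sym2 V) ≤ Fintype.card (V × V) :=
          Fintype.card_le_of_surjective _ hsurj
      _ = Fintype.card V * Fintype.card V := Fintype.card_prod V V
  have hpow : Fintype.card V ≤ 2 ^ Nat.clog 2 (Fintype.card V) :=
    Nat.le_pow_clog one_lt_two _
  have hpow2 : Fintype.card V * Fintype.card V ≤ 2 ^ K := by
    rw [hKdef, two_mul, pow_add]
    exact Nat.mul_le_mul hpow hpow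
  omega

end RoutingGame
end

section
/- Let p be a Nash-routing of a max game on a graph with n ≥ 2 vertices and let p* be any routing. If C(p) ≥ D(p) + 2⌈log₂ n⌉ + 2, then C(p) ≤ 2·L·C(p*) + 2⌈log₂ n⌉. -/
open Finset

namespace RoutingGame

variable {V : Type} [Fintype V] [DecidableEq V] (R : RoutingGame V)

/-- Let `p` be a Nash-routing of a max game on a graph with
`n ≥ 2` vertices and let `p*` be any routing.
If `C(p) ≥ D(p) + 2⌈log₂ n⌉ + 2`, then `C(p) ≤ 2·L·C(p*) + 2⌈log₂ n⌉`. -/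
theorem max_congestion_upper_bound (R : RoutingGame V) (p pstar : R.Routing)
    (hp : R.NashMax p) (hstar : R.IsRouting pstar)
    (hn : 2 ≤ Fintype.card V)
    (hC : R.maxLen p + 2 * Nat.clog 2 (Fintype.card V) + 2 ≤ R.netCong p) :
    R.netCong p ≤ 2 * R.Lmax * R.netCong pstar +
      2 * Nat.clog 2 (Fintype.card V) := by
  classical
  set n := Fintype.card V with hndef
  set c := Nat.clog 2 n with hcdef
  by_contra hcon
  push_neg at hcon
  -- notation
  set C := R.netCong p with hCdef
  set Cs := R.netCong pstar with hCsdef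
  set L := R.Lmax with hLdef
  have i0 : Fin R.N := ⟨0, R.Npos⟩
  -- basic bounds
  have hlen : ∀ i : Fin R.N, ∀ q ∈ R.strat i, q.length ≤ L := by
    intro i q hq
    exact le_trans (Finset.le_sup (f := fun q => SimpleGraph.Walk.length q) hq)
      (Finset.le_sup (f := fun i => (R.strat i).sup fun q => q.length) (mem_univ i))
  have hL1 : 1 ≤ L := by
    obtain ⟨q, hq⟩ := R.strat_nonempty i0
    exact le_trans (R.strat_len i0 q hq) (hlen i0 q hq)
  have hCs1 : 1 ≤ Cs := by
    have h1 : 1 ≤ (pstar i0).length := R.strat_len i0 _ (hstar i0)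
    have h2 : 0 < (pstar i0).edges.length := by
      rw [SimpleGraph.Walk.length_edges]; omega
    obtain ⟨e, he⟩ := List.exists_mem_of_length_pos h2
    have h3 : 1 ≤ R.edgeCong pstar e := by
      rw [RoutingGame.edgeCong, Finset.one_le_card]
      exact ⟨i0, by simp [he]⟩
    exact le_trans h3 (Finset.le_sup (mem_univ e))
  have hCbig : 2 * L * Cs + 2 * c + 1 ≤ C := hcon
  have h2L : 2 * L ≤ 2 * L * Cs := Nat.le_mul_of_pos_right _ hCs1
  -- the level sets of congested edges
  set F : ℕ → Finset (Sym2 V) :=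
    fun k => Finset.univ.filter fun e => C - k ≤ R.edgeCong p e with hFdef
  -- edge congestion only increases by one after a single-player deviation
  have hupd : ∀ (i : Fin R.N) (q : R.G.Walk (R.src i) (R.dst i)) (e : Sym2 V),
      R.edgeCong (Function.update p i q) e ≤ R.edgeCong p e + 1 := by
    intro i q e
    have hsub : (Finset.univ.filter fun j => e ∈ ((Function.update p i q) j).edges)
        ⊆ insert i (Finset.univ.filter fun j => e ∈ (p j).edges) := by
      intro j hj
      simp only [mem_filter, mem_univ, true_and] at hj
      by_cases hji : j = i
      · simp [hji]
      · rw [Function.update_of_ne hji] at hj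
        exact mem_insert_of_mem (by simp [hj])
    calc R.edgeCong (Function.update p i q) e
        ≤ (insert i (Finset.univ.filter fun j => e ∈ (p j).edges)).card :=
          Finset.card_le_card hsub
      _ ≤ R.edgeCong p e + 1 := Finset.card_insert_le _ _
  -- the Nash claim: a player crossing a level-k edge crosses a level-(k+1)
  -- edge in p*
  have hclaim : ∀ k : ℕ, 2 * L + 1 ≤ C - k → ∀ i : Fin R.N,
      (∃ e ∈ (p i).edges, e ∈ F k) → ∃ e ∈ (pstar i).edges, e ∈ F (k + 1) := by
    intro k hk i ⟨e, he, heF⟩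
    have heC : C - k ≤ R.edgeCong p e := by
      simp only [hFdef, mem_filter] at heF; exact heF.2
    have h1 : C - k ≤ R.pathCong p i :=
      le_trans heC (Finset.le_sup (List.mem_toFinset.mpr he))
    have h2 : C - k ≤ R.pcMax (Function.update p i (pstar i)) i :=
      le_trans (le_trans h1 (le_max_left _ _)) (hp.2 i (pstar i) (hstar i))
    rw [RoutingGame.pcMax] at h2
    rw [Function.update_self] at h2
    have h3 : (pstar i).length < C - k :=
      lt_of_le_of_lt (hlen i _ (hstar i)) (by omega)
    have h4 : C - k ≤ R.pathCong (Function.update p i (pstar i)) i := by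
      rcases max_cases (R.pathCong (Function.update p i (pstar i)) i)
        (pstar i).length with ⟨hm, _⟩ | ⟨hm, _⟩
      · rwa [hm] at h2
      · rw [hm] at h2; omega
    rw [RoutingGame.pathCong, Function.update_self] at h4
    obtain ⟨e', he', he'C⟩ := (Finset.le_sup_iff (by omega : 0 < C - k)).mp h4
    refine ⟨e', List.mem_toFinset.mp he', ?_⟩
    have h5 := hupd i (pstar i) e'
    simp only [hFdef, mem_filter, mem_univ, true_and]
    omega
  -- the counting step
  have hstep : ∀ k : ℕ, 2 * L + 1 ≤ C - k →
      (C - k) * (F k).card ≤ (F (k + 1)).card * Cs * L := by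
    intro k hk
    set Pk := Finset.univ.filter
      (fun i : Fin R.N => ∃ e ∈ (p i).edges, e ∈ F k) with hPkdef
    set Pk' := Finset.univ.filter
      (fun i : Fin R.N => ∃ e ∈ (pstar i).edges, e ∈ F (k + 1)) with hPk'def
    have hPsub : Pk ⊆ Pk' := by
      intro i hi
      simp only [hPkdef, mem_filter, mem_univ, true_and] at hi
      simp only [hPk'def, mem_filter, mem_univ, true_and]
      exact hclaim k hk i hi
    have ha : (C - k) * (F k).card ≤ ∑ e ∈ F k, R.edgeCong p e := by
      rw [mul_comm]
      calc (F k).card * (C - k) = (F k).card • (C - k) := by rw [smul_eq_mul]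
        _ ≤ ∑ e ∈ F k, R.edgeCong p e := Finset.card_nsmul_le_sum _ _ _
            (fun e he => by simp only [hFdef, mem_filter] at he; exact he.2)
    have hswap : ∀ (r : R.Routing) (S : Finset (Sym2 V)),
        ∑ e ∈ S, R.edgeCong r e
          = ∑ i : Fin R.N, (S.filter fun e => e ∈ (r i).edges).card := by
      intro r S
      simp only [RoutingGame.edgeCong, Finset.card_filter]
      rw [Finset.sum_comm]
    have hb : ∑ e ∈ F k, R.edgeCong p e ≤ Pk.card * L := by
      rw [hswap p (F k)]
      have hzero : ∀ i ∈ Finset.univ, i ∉ Pk →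
          ((F k).filter fun e => e ∈ (p i).edges).card = 0 := by
        intro i _ hni
        rw [Finset.card_eq_zero, Finset.filter_eq_empty_iff]
        intro e he hee
        exact hni (by simp only [hPkdef, mem_filter, mem_univ, true_and]
                      exact ⟨e, hee, he⟩)
      rw [← Finset.sum_subset (Finset.subset_univ Pk) hzero]
      calc ∑ i ∈ Pk, ((F k).filter fun e => e ∈ (p i).edges).card
          ≤ ∑ i ∈ Pk, L := by
            refine Finset.sum_le_sum fun i _ => ?_
            calc ((F k).filter fun e => e ∈ (p i).edges).card
                ≤ (p i).edges.toFinset.card := Finset.card_le_card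
                  (fun e he => List.mem_toFinset.mpr (mem_filter.mp he).2)
              _ ≤ (p i).edges.length := List.toFinset_card_le _
              _ = (p i).length := SimpleGraph.Walk.length_edges _
              _ ≤ L := hlen i _ (hp.1 i)
        _ = Pk.card * L := by rw [Finset.sum_const, smul_eq_mul]
    have hc : Pk'.card ≤ ∑ e ∈ F (k + 1), R.edgeCong pstar e := by
      rw [hswap pstar (F (k + 1))]
      calc Pk'.card = ∑ i ∈ Pk', 1 := by rw [Finset.sum_const, smul_eq_mul, mul_one]
        _ ≤ ∑ i ∈ Pk', ((F (k + 1)).filter fun e => e ∈ (pstar i).edges).card := by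
            refine Finset.sum_le_sum fun i hi => ?_
            simp only [hPk'def, mem_filter, mem_univ, true_and] at hi
            obtain ⟨e, he, heF⟩ := hi
            rw [Nat.one_le_iff_ne_zero, ← Nat.pos_iff_ne_zero, Finset.card_pos]
            exact ⟨e, mem_filter.mpr ⟨heF, he⟩⟩
        _ ≤ ∑ i : Fin R.N, ((F (k + 1)).filter fun e => e ∈ (pstar i).edges).card :=
            Finset.sum_le_sum_of_subset (Finset.subset_univ _)
    have hd : ∑ e ∈ F (k + 1), R.edgeCong pstar e ≤ (F (k + 1)).card * Cs := by
      calc ∑ e ∈ F (k + 1), R.edgeCong pstar e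
          ≤ (F (k + 1)).card • Cs := Finset.sum_le_card_nsmul _ _ _
            (fun e _ => Finset.le_sup (mem_univ e))
        _ = (F (k + 1)).card * Cs := by rw [smul_eq_mul]
    calc (C - k) * (F k).card ≤ Pk.card * L := le_trans ha hb
      _ ≤ Pk'.card * L := Nat.mul_le_mul_right L (Finset.card_le_card hPsub)
      _ ≤ (F (k + 1)).card * Cs * L :=
          Nat.mul_le_mul_right L (le_trans hc hd)
  -- the doubling induction
  have hF0 : 1 ≤ (F 0).card := by
    have hne : (Finset.univ : Finset (Sym2 V)).Nonempty := by
      have hv : Nonempty V := Fintype.card_pos_iff.mp (by omega)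
      have : Nonempty (Sym2 V) := ⟨Sym2.mk (Classical.arbitrary V) (Classical.arbitrary V)⟩
      exact univ_nonempty
    obtain ⟨e, -, he⟩ := Finset.exists_mem_eq_sup Finset.univ hne (R.edgeCong p)
    rw [Finset.one_le_card]
    exact ⟨e, by simp only [hFdef, mem_filter, mem_univ, true_and]
                 rw [hCdef, RoutingGame.netCong, he]; omega⟩
  have hgrow : ∀ k : ℕ, k ≤ 2 * c → 2 ^ k ≤ (F k).card := by
    intro k
    induction k with
    | zero => intro _; simpa using hF0
    | succ k ih =>
      intro hk1
      have ihk := ih (by omega)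
      have hCk : 2 * L * Cs + 2 ≤ C - k := by omega
      have hk' : 2 * L + 1 ≤ C - k := by omega
      have h1 := hstep k hk'
      have h2 : (2 * L * Cs + 2) * (F k).card ≤ (F (k + 1)).card * Cs * L :=
        le_trans (Nat.mul_le_mul_right _ hCk) h1
      have hmk : 1 ≤ (F k).card := le_trans (Nat.one_le_two_pow) ihk
      have h3 : 2 * (F k).card ≤ (F (k + 1)).card := by nlinarith
      calc 2 ^ (k + 1) = 2 * 2 ^ k := by ring
        _ ≤ 2 * (F k).card := by omega
        _ ≤ (F (k + 1)).card := h3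
  -- the contradiction: too many edges
  have hfinal := hgrow (2 * c) le_rfl
  have hcard : (F (2 * c)).card ≤ (n + 1).choose 2 := by
    calc (F (2 * c)).card ≤ (Finset.univ : Finset (Sym2 V)).card :=
        Finset.card_filter_le _ _
      _ = Fintype.card (Sym2 V) := rfl
      _ = (n + 1).choose 2 := Sym2.card
  have hpow : n * n ≤ 2 ^ (2 * c) := by
    have := Nat.le_pow_clog (by norm_num : 1 < 2) n
    calc n * n ≤ 2 ^ c * 2 ^ c := Nat.mul_le_mul this this
      _ = 2 ^ (2 * c) := by rw [two_mul, pow_add]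
  have hchoose : (n + 1).choose 2 < n * n := by
    rw [Nat.choose_two_right]
    simp only [Nat.add_sub_cancel]
    rw [Nat.div_lt_iff_lt_mul (by norm_num)]
    nlinarith
  omega


end RoutingGame
end

section
/- For every integer n ≥ 3 there exists a max game with n players on the n-vertex cycle graph (each player i has strategy set {p_i, p'_i}, where p_i is the single edge e_i of the cycle and p'_i is the complementary path of length n−1 around the cycle) such that the routing in which every player i chooses p_i is a Nash-routing with social cost 1, and the routing in which every player i chooses p'_i is a Nash-routing with social cost n−1. In particular the price of anarchy of this max game is at least n−1. -/
open Finset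


section CycleHelpers

open SimpleGraph
open Fin.NatCast Fin.CommRing


variable {n : ℕ} [NeZero n]

lemma fin_val_one (hn : 3 ≤ n) : ((1 : Fin n) : ℕ) = 1 := by
  rw [Fin.val_one']; exact Nat.mod_eq_of_lt (by omega)

lemma cyc_adj_sub (hn : 3 ≤ n) (v : Fin n) : (cycleGraph n).Adj v (v - 1) := by
  rw [cycleGraph_adj']; left; rw [sub_sub_cancel]; exact fin_val_one hn

lemma cyc_adj_add (hn : 3 ≤ n) (v : Fin n) : (cycleGraph n).Adj v (v + 1) := by
  rw [cycleGraph_adj']; right; rw [add_sub_cancel_left]; exact fin_val_one hn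

/-- walk going downward k steps -/
def goDown (hn : 3 ≤ n) : ∀ (k : ℕ) (v : Fin n), (cycleGraph n).Walk v (v - (k : Fin n))
  | 0, v => Walk.nil.copy rfl (by simp)
  | (k+1), v => ((goDown hn k (v-1)).cons (cyc_adj_sub hn v)).copy rfl
      (by push_cast; ring)

lemma goDown_length (hn : 3 ≤ n) (k : ℕ) (v : Fin n) : (goDown hn k v).length = k := by
  induction k generalizing v with
  | zero => simp [goDown]
  | succ k ih => simp [goDown, ih]

lemma goDown_support (hn : 3 ≤ n) (k : ℕ) (v : Fin n) :
    (goDown hn k v).support = (List.range (k+1)).map (fun j : ℕ => v - (j : Fin n)) := by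
  induction k generalizing v with
  | zero => simp [goDown, List.range_succ]
  | succ k ih =>
      rw [goDown, Walk.support_copy, Walk.support_cons, ih,
        List.range_succ_eq_map (n := k+1)]
      simp only [List.map_cons, List.map_map, Function.comp_def, Nat.cast_zero, sub_zero,
        Nat.cast_succ]
      congr 1
      apply List.map_congr_left
      intro j _
      ring_nf

lemma goDown_edges (hn : 3 ≤ n) (k : ℕ) (v : Fin n) :
    (goDown hn k v).edges
      = (List.range k).map (fun j : ℕ => s(v - (j:Fin n), v - (j:Fin n) - 1)) := by
  induction k generalizing v with
  | zero => simp [goDown]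
  | succ k ih =>
      rw [goDown, Walk.edges_copy, Walk.edges_cons, ih, List.range_succ_eq_map (n := k)]
      simp only [List.map_cons, List.map_map, Function.comp_def, Nat.cast_zero, sub_zero,
        Nat.cast_succ]
      congr 1
      apply List.map_congr_left
      intro j _
      ring_nf

lemma goDown_isTrail (hn : 3 ≤ n) {k : ℕ} (hk : k < n) (v : Fin n) :
    (goDown hn k v).IsTrail := by
  apply Walk.IsPath.isTrail
  apply Walk.IsPath.mk'
  rw [goDown_support]
  apply List.Nodup.map_on _ List.nodup_range
  intro a ha b hb hab
  rw [List.mem_range] at ha hb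
  have : ((a : Fin n)) = (b : Fin n) := by
    have := sub_right_injective (G := Fin n) hab  -- maybe wrong; fallback below
    exact this
  have ha' := Fin.val_cast_of_lt (by omega : a < n)
  have hb' := Fin.val_cast_of_lt (by omega : b < n)
  rw [Fin.ext_iff, ha', hb'] at this
  exact this

lemma natCast_nsub_one (hn : 3 ≤ n) : ((n - 1 : ℕ) : Fin n) = -1 := by
  have h : ((n - 1 : ℕ) : Fin n) + 1 = 0 := by
    have : ((n - 1 : ℕ) : Fin n) + 1 = ((n - 1 + 1 : ℕ) : Fin n) := by push_cast; ring
    rw [this, Nat.sub_add_cancel (by omega), Fin.natCast_self]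
  linear_combination h

lemma two_ne_zero_fin (hn : 3 ≤ n) : (2 : Fin n) ≠ 0 := by
  intro h
  have h2 : ((2 : Fin n) : ℕ) = 2 := by
    have : ((2 : ℕ) : Fin n) = (2 : Fin n) := by push_cast; ring
    rw [← this, Fin.val_cast_of_lt (by omega)]
  rw [h] at h2
  simp at h2

lemma mem_goDown_iff (hn : 3 ≤ n) (k : ℕ) (v : Fin n) (e : Sym2 (Fin n)) :
    e ∈ (goDown hn k v).edges ↔ ∃ j < k, e = s(v - (j : Fin n), v - (j : Fin n) - 1) := by
  rw [goDown_edges]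
  simp only [List.mem_map, List.mem_range]
  constructor
  · rintro ⟨j, hj, rfl⟩; exact ⟨j, hj, rfl⟩
  · rintro ⟨j, hj, rfl⟩; exact ⟨j, hj, rfl⟩

lemma mem_pb_iff (hn : 3 ≤ n) (i j : Fin n) :
    s(i, i + 1) ∈ (goDown hn (n-1) j).edges ↔ j ≠ i := by
  rw [mem_goDown_iff hn]
  constructor
  · rintro ⟨m, hm, he⟩
    rw [Sym2.eq_iff] at he
    rcases he with ⟨h1, h2⟩ | ⟨h1, h2⟩
    · exfalso
      apply two_ne_zero_fin hn
      have : i + 1 = i - 1 := by rw [h1] at h2 ⊢; linear_combination h2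
      linear_combination this
    · intro hji
      subst hji
      have : ((m : Fin n) + 1) = 0 := by linear_combination h2
      have hm1 : (((m + 1 : ℕ)) : Fin n) = 0 := by push_cast; linear_combination this
      have := Fin.val_cast_of_lt (by omega : m + 1 < n)
      rw [hm1] at this
      simp at this
  · intro hji
    refine ⟨(j - i - 1).val, ?_, ?_⟩
    · by_contra h
      have hv : (j - i - 1).val = n - 1 := by have := (j - i - 1).isLt; omega
      have : j - i - 1 = -1 := by
        rw [← natCast_nsub_one hn, ← hv, Fin.cast_val_eq_self]
      apply hji
      linear_combination this
    · rw [Fin.cast_val_eq_self]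
      rw [Sym2.eq_iff]
      right
      constructor <;> ring


lemma ed_inj (hn : 3 ≤ n) (i j : Fin n) (h : s(i, i + 1) = s(j, j + 1)) : i = j := by
  rw [Sym2.eq_iff] at h
  rcases h with ⟨h1, _⟩ | ⟨h1, h2⟩
  · exact h1
  · exact absurd (by linear_combination h2 - h1) (two_ne_zero_fin hn)

/-- the single-edge walk -/
def paW (hn : 3 ≤ n) (i : Fin n) : (SimpleGraph.cycleGraph n).Walk i (i + 1) :=
  Walk.cons (cyc_adj_add hn i) Walk.nil

/-- the long way around -/
def pbW (hn : 3 ≤ n) (i : Fin n) : (SimpleGraph.cycleGraph n).Walk i (i + 1) :=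
  (goDown hn (n - 1) i).copy rfl (by rw [natCast_nsub_one hn]; exact sub_neg_eq_add i 1)

lemma paW_edges (hn : 3 ≤ n) (i : Fin n) : (paW hn i).edges = [s(i, i + 1)] := rfl

lemma paW_length (hn : 3 ≤ n) (i : Fin n) : (paW hn i).length = 1 := rfl

lemma pbW_length (hn : 3 ≤ n) (i : Fin n) : (pbW hn i).length = n - 1 := by
  rw [pbW, Walk.length_copy, goDown_length]

lemma mem_paW_iff (hn : 3 ≤ n) (i j : Fin n) :
    s(i, i + 1) ∈ (paW hn j).edges ↔ j = i := by
  rw [paW_edges, List.mem_singleton]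
  exact ⟨fun h => ed_inj hn j i (by rw [h]), fun h => by rw [h]⟩

lemma mem_pbW_iff (hn : 3 ≤ n) (i j : Fin n) :
    s(i, i + 1) ∈ (pbW hn j).edges ↔ j ≠ i := by
  rw [pbW, Walk.edges_copy]; exact mem_pb_iff hn i j

lemma pbW_edges_form (hn : 3 ≤ n) (j : Fin n) (e : Sym2 (Fin n))
    (he : e ∈ (pbW hn j).edges) : ∃ m : Fin n, e = s(m, m + 1) := by
  rw [pbW, Walk.edges_copy, mem_goDown_iff hn] at he
  obtain ⟨l, _, rfl⟩ := he
  refine ⟨j - (l : Fin n) - 1, ?_⟩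
  rw [Sym2.eq_iff]; right; constructor <;> ring

lemma src_ne_dst_cyc (hn : 3 ≤ n) (i : Fin n) : i ≠ i + 1 := by
  intro h
  apply two_ne_zero_fin hn
  have h1 : (1 : Fin n) = 0 := by linear_combination -h
  linear_combination 2 * h1


end CycleHelpers

namespace RoutingGame

variable {V : Type} [Fintype V] [DecidableEq V] (R : RoutingGame V)

section CycleGame

open SimpleGraph

variable {n : ℕ} [NeZero n]

/-- The cycle game. -/
def cycleGame (hn : 3 ≤ n) : RoutingGame (Fin n) where
  G := SimpleGraph.cycleGraph n
  N := n
  Npos := by omega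
  src := fun i => i
  dst := fun i => i + 1
  src_ne_dst := src_ne_dst_cyc hn
  strat := fun i => {paW hn i, pbW hn i}
  strat_nonempty := fun i => ⟨paW hn i, Finset.mem_insert_self _ _⟩
  strat_trail := by
    intro i q hq
    rcases Finset.mem_insert.mp hq with rfl | hq
    · simp [paW, Walk.isTrail_def]
    · rw [Finset.mem_singleton] at hq
      subst hq
      rw [pbW, Walk.isTrail_copy]
      exact goDown_isTrail hn (by omega) i
  strat_len := by
    intro i q hq
    rcases Finset.mem_insert.mp hq with rfl | hq
    · rw [paW_length]
    · rw [Finset.mem_singleton] at hq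
      subst hq
      rw [pbW_length]; omega

end CycleGame

/-- For every integer `n ≥ 3` there exists a max game with `n`
players on the `n`-vertex cycle graph (each player `i` has strategy set
`{p_i, p'_i}`, where `p_i` is a single edge `e_i` of the cycle — distinct
players getting distinct edges — and `p'_i` is the complementary path of length
`n − 1` around the cycle) such that the routing in which every player chooses
`p_i` is a Nash-routing with social cost `1`, and the routing in which every
player chooses `p'_i` is a Nash-routing with social cost `n − 1`.  In
particular the price of anarchy of this max game is at least `n − 1`. -/
theorem max_game_poa_lower_bound (n : ℕ) (hn : 3 ≤ n) :
    ∃ R : RoutingGame (Fin n), R.G = SimpleGraph.cycleGraph n ∧ R.N = n ∧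
      ∃ pa pb : ∀ i : Fin R.N, R.G.Walk (R.src i) (R.dst i),
        (∀ i, R.strat i = {pa i, pb i}) ∧
        (∀ i, (pa i).length = 1) ∧
        (∀ i j, i ≠ j → (pa i).edges ≠ (pa j).edges) ∧
        (∀ i, (pb i).length = n - 1) ∧
        (∀ i, Disjoint (pa i).edges.toFinset (pb i).edges.toFinset) ∧
        R.NashMax pa ∧ R.SCMax pa = 1 ∧
        R.NashMax pb ∧ R.SCMax pb = n - 1 ∧
        (n - 1) * R.SCMax pa ≤ R.SCMax pb := by
  haveI : NeZero n := ⟨by omega⟩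
  have hCpaU : ∀ e, (cycleGame hn).edgeCong (paW (n := n) hn) e ≤ 1 := by
    intro e
    show (Finset.univ.filter fun j : Fin n => e ∈ (paW (n := n) hn j).edges).card ≤ 1
    apply Finset.card_le_one.mpr
    intro a ha b hb
    rw [Finset.mem_filter] at ha hb
    have ha2 := ha.2
    have hb2 := hb.2
    rw [paW_edges, List.mem_singleton] at ha2 hb2
    exact ed_inj hn a b (ha2.symm.trans hb2)
  have hi0 : (⟨0, by omega⟩ : Fin n) ∈ (Finset.univ : Finset (Fin n)) := Finset.mem_univ _
  have hmaxLenA : (cycleGame hn).maxLen (paW (n := n) hn) = 1 := by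
    show Finset.univ.sup (fun i : Fin n => (paW (n := n) hn i).length) = 1
    apply le_antisymm
    · exact Finset.sup_le fun i _ => le_of_eq (paW_length hn i)
    · exact le_trans (le_of_eq (paW_length hn _).symm)
        (Finset.le_sup (f := fun i => (paW (n := n) hn i).length) hi0)
  have hCpbU : ∀ e, (cycleGame hn).edgeCong (pbW (n := n) hn) e ≤ n - 1 := by
    intro e
    show (Finset.univ.filter fun j : Fin n => e ∈ (pbW (n := n) hn j).edges).card ≤ n - 1
    by_cases h : ∃ m : Fin n, e = s(m, m + 1)
    · obtain ⟨m, rfl⟩ := h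
      calc (Finset.univ.filter fun j => s(m, m+1) ∈ (pbW (n := n) hn j).edges).card
          ≤ (Finset.univ.erase m).card := by
            apply Finset.card_le_card
            intro j hj
            rw [Finset.mem_filter] at hj
            exact Finset.mem_erase.mpr ⟨(mem_pbW_iff hn m j).mp hj.2, Finset.mem_univ _⟩
        _ = n - 1 := by
            rw [Finset.card_erase_of_mem (Finset.mem_univ m), Finset.card_univ,
              Fintype.card_fin]
    · have h0 : (Finset.univ.filter fun j => e ∈ (pbW (n := n) hn j).edges) = ∅ := by
        apply Finset.filter_eq_empty_iff.mpr
        intro j _ hj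
        exact h (pbW_edges_form hn j e hj)
      rw [h0]
      simp
  have hmaxLenB : (cycleGame hn).maxLen (pbW (n := n) hn) = n - 1 := by
    show Finset.univ.sup (fun i : Fin n => (pbW (n := n) hn i).length) = n - 1
    apply le_antisymm
    · exact Finset.sup_le fun i _ => le_of_eq (pbW_length hn i)
    · exact le_trans (le_of_eq (pbW_length hn _).symm)
        (Finset.le_sup (f := fun i => (pbW (n := n) hn i).length) hi0)
  have hpathB : ∀ i : Fin n, (cycleGame hn).pathCong (pbW (n := n) hn) i ≤ n - 1 := by
    intro i
    unfold pathCong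
    exact Finset.sup_le fun e _ => hCpbU e
  have hSCA : (cycleGame hn).SCMax (paW (n := n) hn) = 1 := by
    unfold SCMax
    apply le_antisymm
    · apply max_le
      · unfold netCong
        exact Finset.sup_le fun e _ => hCpaU e
      · exact le_of_eq hmaxLenA
    · exact le_trans (le_of_eq hmaxLenA.symm) (le_max_right _ _)
  have hSCB : (cycleGame hn).SCMax (pbW (n := n) hn) = n - 1 := by
    unfold SCMax
    apply le_antisymm
    · apply max_le
      · unfold netCong
        exact Finset.sup_le fun e _ => hCpbU e
      · exact le_of_eq hmaxLenB
    · exact le_trans (le_of_eq hmaxLenB.symm) (le_max_right _ _)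
  have hNashA : (cycleGame hn).NashMax (paW (n := n) hn) := by
    refine ⟨fun i => Finset.mem_insert_self _ _, ?_⟩
    show ∀ i : Fin n, ∀ q ∈ (cycleGame hn).strat i,
      (cycleGame hn).pcMax (paW (n := n) hn) i ≤
        (cycleGame hn).pcMax (Function.update (paW (n := n) hn) i q) i
    intro i q hq
    have h1 : (cycleGame hn).pcMax (paW (n := n) hn) i ≤ 1 := by
      unfold pcMax
      apply max_le
      · unfold pathCong
        exact Finset.sup_le fun e _ => hCpaU e
      · exact le_of_eq (paW_length hn i)
    have h2 : 1 ≤ (cycleGame hn).pcMax (Function.update (paW (n := n) hn) i q) i := by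
      unfold pcMax
      refine le_trans ?_ (le_max_right _ _)
      erw [Function.update_self]
      exact (cycleGame hn).strat_len i q hq
    exact le_trans h1 h2
  have hNashB : (cycleGame hn).NashMax (pbW (n := n) hn) := by
    refine ⟨fun i => Finset.mem_insert_of_mem (Finset.mem_singleton_self _), ?_⟩
    show ∀ i : Fin n, ∀ q ∈ (cycleGame hn).strat i,
      (cycleGame hn).pcMax (pbW (n := n) hn) i ≤
        (cycleGame hn).pcMax (Function.update (pbW (n := n) hn) i q) i
    intro i q hq
    have hL : (cycleGame hn).pcMax (pbW (n := n) hn) i ≤ n - 1 := by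
      unfold pcMax
      exact max_le (hpathB i) (le_of_eq (pbW_length hn i))
    rcases Finset.mem_insert.mp hq with rfl | hq
    · -- deviate to paW
      refine le_trans hL ?_
      unfold pcMax
      refine le_trans ?_ (le_max_left _ _)
      have hmem : s(i, i + 1) ∈
          ((Function.update (pbW (n := n) hn) i (paW (n := n) hn i)) i).edges.toFinset := by
        rw [Function.update_self, List.mem_toFinset, paW_edges]
        exact List.mem_singleton_self _
      unfold pathCong
      refine le_trans ?_ (Finset.le_sup (f := (cycleGame hn).edgeCong
        (Function.update (pbW (n := n) hn) i (paW (n := n) hn i))) hmem)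
      show n - 1 ≤ (Finset.univ.filter fun j : Fin n =>
        s(i, i + 1) ∈ ((Function.update (pbW (n := n) hn) i (paW (n := n) hn i)) j).edges).card
      calc n - 1 = (Finset.univ.erase i).card := by
            rw [Finset.card_erase_of_mem (Finset.mem_univ i), Finset.card_univ,
              Fintype.card_fin]
        _ ≤ _ := by
            apply Finset.card_le_card
            intro j hj
            rw [Finset.mem_erase] at hj
            rw [Finset.mem_filter]
            refine ⟨Finset.mem_univ _, ?_⟩
            rw [Function.update_of_ne hj.1]
            exact (mem_pbW_iff hn i j).mpr hj.1
    · replace hq := Finset.mem_singleton.mp hq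
      subst hq
      exact le_of_eq (congrArg (fun p => (cycleGame hn).pcMax p i)
        (Function.update_eq_self (f := (pbW (n := n) hn : (cycleGame hn).Routing)) i).symm)
  refine ⟨cycleGame hn, rfl, rfl, paW (n := n) hn, pbW (n := n) hn, fun i => rfl, paW_length hn,
    ?_, pbW_length hn, ?_, hNashA, hSCA, hNashB, hSCB, ?_⟩
  · show ∀ i j : Fin n, i ≠ j → (paW (n := n) hn i).edges ≠ (paW (n := n) hn j).edges
    intro i j hij h
    rw [paW_edges, paW_edges] at h
    simp only [List.cons.injEq, and_true] at h
    exact hij (ed_inj hn i j h)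
  · show ∀ i : Fin n,
      Disjoint (paW (n := n) hn i).edges.toFinset (pbW (n := n) hn i).edges.toFinset
    intro i
    rw [Finset.disjoint_left]
    intro e hea heb
    rw [List.mem_toFinset, paW_edges, List.mem_singleton] at hea
    rw [List.mem_toFinset] at heb
    subst hea
    exact (mem_pbW_iff hn i i).mp heb rfl
  · rw [hSCA, hSCB, mul_one]

end RoutingGame
end

section
/- In any sum-bucket game, if a greedy move by some player takes a routing p to a new routing p', then M(p') < M(p) in the total order on routing vectors, where for r = N + 2L − 1 the routing vector of a routing p is M(p) = [m_1(p),…,m_r(p)] with m_j(p) equal to the number of players whose cost pc_i(p) equals j, and M(p') < M(p) iff there is an index j with m_k(p') = m_k(p) for all k > j and m_j(p') < m_j(p). -/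
open Finset

namespace RoutingGame

variable {V : Type} [Fintype V] [DecidableEq V] (R : RoutingGame V)

/-- Player cost in the sum game: `pc_i(p) = C_i(p) + D_i(p)`. -/
def pcSum (p : R.Routing) (i : Fin R.N) : ℕ :=
  R.pathCong p i + (p i).length

/-- For a bucket index `b`, the number of players whose path uses edge `e`
and belongs to bucket `b` (the bucket of a path `q` is `⌊log₂ |q|⌋`). -/
def nCongB (p : R.Routing) (b : ℕ) (e : Sym2 V) : ℕ :=
  (Finset.univ.filter fun j => e ∈ (p j).edges ∧ Nat.log 2 (p j).length = b).card

/-- The normalized congestion `C̄_i(p)` of player `i`: the maximum, over the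
edges of `p_i`, of the congestion caused by paths in the bucket of `p_i`. -/
def nCong (p : R.Routing) (i : Fin R.N) : ℕ :=
  (p i).edges.toFinset.sup (R.nCongB p (Nat.log 2 (p i).length))

/-- The normalized length `D̄_i(p) = 2 ^ (B(p_i) + 1) - 1` of player `i`. -/
def nLen (p : R.Routing) (i : Fin R.N) : ℕ :=
  2 ^ (Nat.log 2 (p i).length + 1) - 1

/-- Player cost in the sum-bucket game: `pc_i(p) = C̄_i(p) + D̄_i(p)`. -/
def pcSB (p : R.Routing) (i : Fin R.N) : ℕ := R.nCong p i + R.nLen p i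

/-- The normalized congestion `C̄(p)` of a routing. -/
def nC (p : R.Routing) : ℕ := Finset.univ.sup (R.nCong p)

/-- The normalized length `D̄(p)` of a routing. -/
def nD (p : R.Routing) : ℕ := Finset.univ.sup (R.nLen p)

/-- The normalized edge congestion `C̄_e(p) = max_i C̄_{e,p_i}(p)`. -/
def nCe (p : R.Routing) (e : Sym2 V) : ℕ :=
  Finset.univ.sup fun i => R.nCongB p (Nat.log 2 (p i).length) e

/-- Social cost in the sum-bucket game: `SC(p) = C̄(p) + D̄(p)`. -/
def SCSB (p : R.Routing) : ℕ := R.nC p + R.nD p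

/-- A Nash-routing of the sum-bucket game: a routing in which every player is
locally optimal. -/
def NashSB (p : R.Routing) : Prop :=
  R.IsRouting p ∧
    ∀ i, ∀ q ∈ R.strat i, R.pcSB p i ≤ R.pcSB (Function.update p i q) i

/-- A greedy move in the sum-bucket game takes `p` to `p'` by letting a single
player switch to a strictly cheaper path in its strategy set. -/
def GreedyMoveSB (p p' : R.Routing) : Prop :=
  ∃ i, ∃ q ∈ R.strat i,
    p' = Function.update p i q ∧ R.pcSB p' i < R.pcSB p i

/-- The entry `m_j(p)` of the routing vector of the sum-bucket game: the number
of players whose cost equals `j`. -/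
def mvecSB (p : R.Routing) (j : ℕ) : ℕ :=
  (Finset.univ.filter fun i => R.pcSB p i = j).card

/-- The strict order on routing vectors (sum-bucket game): `M(p') < M(p)` iff
the vectors agree above some index `j` and the entry of `p'` at `j` is smaller. -/
def MLtSB (p' p : R.Routing) : Prop :=
  ∃ j : ℕ, (∀ k, j < k → R.mvecSB p' k = R.mvecSB p k) ∧
    R.mvecSB p' j < R.mvecSB p j

/-- If an edge/bucket pair is not hit by the new path `q` of player `i`, its
bucket congestion does not increase when `i` switches to `q`. -/
lemma nCongB_update_le (R : RoutingGame V) (p : R.Routing) (i : Fin R.N)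
    (q : R.G.Walk (R.src i) (R.dst i)) (b : ℕ) (e : Sym2 V)
    (h : ¬(e ∈ q.edges ∧ Nat.log 2 q.length = b)) :
    R.nCongB (Function.update p i q) b e ≤ R.nCongB p b e := by
  apply Finset.card_le_card
  intro j hj
  simp only [Finset.mem_filter, Finset.mem_univ, true_and] at hj ⊢
  by_cases hji : j = i
  · subst hji
    rw [Function.update_self] at hj
    exact absurd hj h
  · rwa [Function.update_of_ne hji] at hj

/-- Core lemma: after player `i` switches to `q`, any other player's cost is
at most the max of its old cost and `i`'s new cost. -/
lemma pcSB_update_le (R : RoutingGame V) (p : R.Routing) (i : Fin R.N)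
    (q : R.G.Walk (R.src i) (R.dst i)) (j : Fin R.N) (hj : j ≠ i) :
    R.pcSB (Function.update p i q) j ≤
      max (R.pcSB p j) (R.pcSB (Function.update p i q) i) := by
  set p' := Function.update p i q with hp'
  have hpj : p' j = p j := Function.update_of_ne hj _ _
  have hpi : p' i = q := Function.update_self _ _ _
  by_cases hb : Nat.log 2 q.length = Nat.log 2 (p j).length
  · -- same bucket: bound edgewise by old congestion or i's new congestion
    have hlen : R.nLen p' i = R.nLen p' j := by
      unfold nLen; rw [hpi, hpj, hb]
    have hsup : R.nCong p' j ≤ max (R.nCong p j) (R.nCong p' i) := by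
      unfold nCong
      rw [hpj]
      apply Finset.sup_le
      intro e he
      by_cases heq : e ∈ q.edges
      · refine le_max_of_le_right ?_
        rw [hpi]
        rw [← hb]
        exact Finset.le_sup (List.mem_toFinset.mpr heq)
      · refine le_max_of_le_left ?_
        refine le_trans (R.nCongB_update_le p i q _ e (by tauto)) ?_
        exact Finset.le_sup he
    unfold pcSB
    have h1 : R.nLen p' j = R.nLen p j := by unfold nLen; rw [hpj]
    rw [h1]
    rcases max_cases (R.nCong p j) (R.nCong p' i) with ⟨hm, _⟩ | ⟨hm, _⟩
    · rw [hm] at hsup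
      exact le_max_of_le_left (by omega)
    · rw [hm] at hsup
      refine le_max_of_le_right ?_
      rw [← hlen] at h1
      omega
  · -- different bucket: player j's congestion cannot increase
    have hsup : R.nCong p' j ≤ R.nCong p j := by
      unfold nCong
      rw [hpj]
      apply Finset.sup_le
      intro e he
      refine le_trans (R.nCongB_update_le p i q _ e (by tauto)) ?_
      exact Finset.le_sup he
    refine le_max_of_le_left ?_
    unfold pcSB
    have h1 : R.nLen p' j = R.nLen p j := by unfold nLen; rw [hpj]
    omega

/-- In any sum-bucket game, if a greedy move by some player takes
a routing `p` to a new routing `p'`, then `M(p') < M(p)` in the total order on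
routing vectors, where `m_j(p)` is the number of players whose cost `pc_i(p)`
equals `j`. -/
theorem sum_bucket_greedy_decreases_vector (R : RoutingGame V)
    (p p' : R.Routing) (hp : R.IsRouting p) (h : R.GreedyMoveSB p p') :
    R.MLtSB p' p := by
  obtain ⟨i, q, hq, hpe, hlt⟩ := h
  have hpp : p = Function.update p' i (p i) := by
    funext j
    by_cases hj : j = i
    · subst hj; simp
    · simp [hpe, Function.update_of_ne hj]
  have key1 : ∀ j, j ≠ i → R.pcSB p' j ≤ max (R.pcSB p j) (R.pcSB p' i) := by
    intro j hj
    rw [hpe]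
    exact R.pcSB_update_le p i q j hj
  have key2 : ∀ j, j ≠ i → R.pcSB p j ≤ max (R.pcSB p' j) (R.pcSB p i) := by
    intro j hj
    have := R.pcSB_update_le p' i (p i) j hj
    rwa [← hpp] at this
  set c := R.pcSB p i with hc
  set c' := R.pcSB p' i with hc'
  refine ⟨c, ?_, ?_⟩
  · intro k hk
    unfold mvecSB
    congr 1
    ext j
    simp only [Finset.mem_filter, Finset.mem_univ, true_and]
    by_cases hj : j = i
    · subst hj
      rw [← hc, ← hc']
      omega
    · have h1 := le_max_iff.mp (key1 j hj)
      have h2 := le_max_iff.mp (key2 j hj)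
      constructor <;> intro hh <;> omega
  · unfold mvecSB
    apply Finset.card_lt_card
    rw [Finset.ssubset_iff_of_subset]
    · refine ⟨i, ?_, ?_⟩
      · simp [← hc]
      · simp only [Finset.mem_filter, Finset.mem_univ, true_and]
        omega
    · intro j hj
      simp only [Finset.mem_filter, Finset.mem_univ, true_and] at hj ⊢
      have hji : j ≠ i := by rintro rfl; omega
      have h1 := le_max_iff.mp (key1 j hji)
      have h2 := le_max_iff.mp (key2 j hji)
      omega

end RoutingGame
end

section
/- Let p be a Nash-routing of a sum-bucket game and let p* = (p*_1,…,p*_N) be any routing, with D̄* = D̄(p*). Then for every player i and every edge e ∈ p_i, there exists an edge e' ∈ p*_i with C̄_{e',p*_i}(p) ≥ C̄_{e,p_i}(p) − D̄*; that is, |f(e,i)| ≥ 1. -/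
open Finset

namespace RoutingGame

variable {V : Type} [Fintype V] [DecidableEq V] (R : RoutingGame V)

/-- Let `p` be a Nash-routing of a sum-bucket game and let `p*`
be any routing, with `D̄* = D̄(p*)`.  Then for every player `i` and every edge
`e ∈ p_i`, there exists an edge `e' ∈ p*_i` with
`C̄_{e',p*_i}(p) ≥ C̄_{e,p_i}(p) − D̄*`; that is, `|f(e,i)| ≥ 1`. -/
theorem sum_bucket_f_nonempty (R : RoutingGame V) (p pstar : R.Routing)
    (hp : R.NashSB p) (hstar : R.IsRouting pstar)
    (i : Fin R.N) (e : Sym2 V) (he : e ∈ (p i).edges) :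
    ∃ e' ∈ (pstar i).edges,
      R.nCongB p (Nat.log 2 (p i).length) e ≤
        R.nCongB p (Nat.log 2 (pstar i).length) e' + R.nD pstar := by
  classical
  obtain ⟨hpr, hnash⟩ := hp
  set p' := Function.update p i (pstar i) with hp'def
  have hqi : R.pcSB p i ≤ R.pcSB p' i := hnash i (pstar i) (hstar i)
  have hp'i : p' i = pstar i := Function.update_self i (pstar i) p
  -- edges of pstar i nonempty
  have hlen : 1 ≤ (pstar i).length := R.strat_len i _ (hstar i)
  have hne : ((pstar i).edges.toFinset).Nonempty := by
    rw [List.toFinset_nonempty_iff]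
    intro h
    have := (pstar i).length_edges
    rw [h] at this
    simp at this
    omega
  obtain ⟨e', he', hsup⟩ := Finset.exists_mem_eq_sup _ hne
    (R.nCongB p' (Nat.log 2 (pstar i).length))
  refine ⟨e', List.mem_toFinset.mp he', ?_⟩
  have h1 : R.nCongB p (Nat.log 2 (p i).length) e ≤ R.nCong p i :=
    Finset.le_sup (List.mem_toFinset.mpr he)
  have h2 : R.nCong p' i = R.nCongB p' (Nat.log 2 (pstar i).length) e' := by
    rw [nCong, hp'i]; exact hsup
  -- removing the update increases count by at most 1
  have h3 : R.nCongB p' (Nat.log 2 (pstar i).length) e' ≤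
      R.nCongB p (Nat.log 2 (pstar i).length) e' + 1 := by
    unfold nCongB
    have hsub : (Finset.univ.filter fun j =>
        e' ∈ (p' j).edges ∧ Nat.log 2 (p' j).length = Nat.log 2 (pstar i).length) ⊆
        insert i (Finset.univ.filter fun j =>
        e' ∈ (p j).edges ∧ Nat.log 2 (p j).length = Nat.log 2 (pstar i).length) := by
      intro j hj
      rcases eq_or_ne j i with rfl | hji
      · exact Finset.mem_insert_self _ _
      · refine Finset.mem_insert_of_mem ?_
        simp only [Finset.mem_filter, Finset.mem_univ, true_and] at hj ⊢
        rwa [hp'def, Function.update_of_ne hji] at hj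
    exact (Finset.card_le_card hsub).trans (Finset.card_insert_le _ _)
  have h4 : R.nLen p' i = R.nLen pstar i := by unfold nLen; rw [hp'i]
  have h5 : R.nLen pstar i ≤ R.nD pstar := Finset.le_sup (Finset.mem_univ i)
  have h6 : 1 ≤ R.nLen p i := by
    unfold nLen
    have h : (2:ℕ) ^ 1 ≤ 2 ^ (Nat.log 2 (p i).length + 1) :=
      Nat.pow_le_pow_right (by norm_num) (by omega)
    rw [pow_one] at h
    omega
  have key : R.nCongB p (Nat.log 2 (p i).length) e + R.nLen p i ≤
      R.nCongB p (Nat.log 2 (pstar i).length) e' + 1 + R.nD pstar := by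
    calc R.nCongB p (Nat.log 2 (p i).length) e + R.nLen p i
        ≤ R.nCong p i + R.nLen p i := by omega
      _ = R.pcSB p i := rfl
      _ ≤ R.pcSB p' i := hqi
      _ = R.nCong p' i + R.nLen p' i := rfl
      _ = R.nCongB p' (Nat.log 2 (pstar i).length) e' + R.nLen pstar i := by
          rw [h2, h4]
      _ ≤ _ := by omega
  omega

end RoutingGame
end

section
/- Let p be a Nash-routing of a sum-bucket game on a graph with n ≥ 2 vertices, and let p* be any routing with C̄* = C̄(p*) and D̄* = D̄(p*). Then C̄(p) ≤ 18 · C̄* · D̄* · ⌈log₂ n⌉². -/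
open Finset

namespace RoutingGame

variable {V : Type} [Fintype V] [DecidableEq V] (R : RoutingGame V)

section Aux

variable (p pstar : R.Routing)

lemma nLen_add_one (i : Fin R.N) :
    R.nLen p i + 1 = 2 ^ (Nat.log 2 (p i).length + 1) := by
  have h2 : 2 ≤ 2 ^ (Nat.log 2 (p i).length + 1) := by
    have := Nat.one_le_two_pow (n := Nat.log 2 (p i).length)
    calc 2 = 2 * 1 := rfl
    _ ≤ 2 * 2 ^ (Nat.log 2 (p i).length) := by omega
    _ = 2 ^ (Nat.log 2 (p i).length + 1) := by ring
  unfold nLen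
  omega

lemma one_le_nLen (i : Fin R.N) : 1 ≤ R.nLen p i := by
  have := R.nLen_add_one p i
  have h2 : 2 ≤ 2 ^ (Nat.log 2 (p i).length + 1) := by omega
  omega

lemma nCongB_le_nCong {j : Fin R.N} {e : Sym2 V} (he : e ∈ (p j).edges) :
    R.nCongB p (Nat.log 2 (p j).length) e ≤ R.nCong p j :=
  Finset.le_sup (List.mem_toFinset.mpr he)

lemma walk_edges_toFinset_nonempty {u v : V} {q : R.G.Walk u v} (hlen : 1 ≤ q.length) :
    q.edges.toFinset.Nonempty := by
  have : q.edges ≠ [] := by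
    intro h
    have := q.length_edges
    rw [h] at this
    simp at this
    omega
  obtain ⟨e, he⟩ := List.exists_mem_of_ne_nil _ this
  exact ⟨e, List.mem_toFinset.mpr he⟩

lemma pow_bucket_le (j : Fin R.N) :
    2 ^ (Nat.log 2 (p j).length + 1) ≤ R.nD p + 1 := by
  have h1 : R.nLen p j ≤ R.nD p := Finset.le_sup (Finset.mem_univ j)
  have h2 := R.nLen_add_one p j
  omega

end Aux
section Aux2

variable (p pstar : R.Routing)

lemma exists_deviation_edge (hp : R.NashSB p) (hstar : R.IsRouting pstar) (j : Fin R.N) :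
    ∃ e ∈ (pstar j).edges,
      R.nCong p j + R.nLen p j ≤
        R.nCongB p (Nat.log 2 (pstar j).length) e + 2 ^ (Nat.log 2 (pstar j).length + 1) := by
  classical
  have hq : pstar j ∈ R.strat j := hstar j
  have hnash := hp.2 j (pstar j) hq
  set p' := Function.update p j (pstar j) with hp'
  have hp'j : p' j = pstar j := Function.update_self j (pstar j) p
  -- the edges of pstar j are nonempty
  have hne : (pstar j).edges.toFinset.Nonempty :=
    R.walk_edges_toFinset_nonempty (R.strat_len j _ hq)
  obtain ⟨e, heMem, hesup⟩ :=
    Finset.exists_mem_eq_sup _ hne (R.nCongB p' (Nat.log 2 (pstar j).length))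
  refine ⟨e, List.mem_toFinset.mp heMem, ?_⟩
  -- the congestion in p' exceeds that in p by at most one
  have hle : R.nCongB p' (Nat.log 2 (pstar j).length) e ≤
      R.nCongB p (Nat.log 2 (pstar j).length) e + 1 := by
    unfold nCongB
    refine le_trans (Finset.card_le_card ?_) (Finset.card_insert_le j _)
    intro k hk
    simp only [Finset.mem_filter, Finset.mem_univ, true_and] at hk
    by_cases hkj : k = j
    · subst hkj; exact Finset.mem_insert_self k _
    · refine Finset.mem_insert_of_mem ?_
      rw [hp', Function.update_of_ne hkj] at hk
      simp only [Finset.mem_filter, Finset.mem_univ, true_and]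
      exact hk
  have e2 : R.pcSB p' j = R.nCongB p' (Nat.log 2 (pstar j).length) e + R.nLen p' j := by
    unfold pcSB nCong
    rw [hp'j, ← hesup]
  have e3 : R.nLen p' j + 1 = 2 ^ (Nat.log 2 (pstar j).length + 1) := by
    have := R.nLen_add_one p' j
    rw [hp'j] at this
    exact this
  have e1 : R.pcSB p j = R.nCong p j + R.nLen p j := rfl
  omega

lemma card_sym2_le : Fintype.card (Sym2 V) ≤ Fintype.card V ^ 2 := by
  rw [Sym2.card, Nat.choose_two_right]
  simp only [Nat.add_sub_cancel]
  calc (Fintype.card V + 1) * Fintype.card V / 2 ≤ 2 * Fintype.card V ^ 2 / 2 :=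
        Nat.div_le_div_right (by nlinarith [Nat.zero_le (Fintype.card V)])
  _ = Fintype.card V ^ 2 := Nat.mul_div_cancel_left _ (by norm_num)

lemma pow_two_clog (hn : 2 ≤ Fintype.card V) :
    Fintype.card V ^ 2 ≤ 2 ^ (2 * Nat.clog 2 (Fintype.card V)) := by
  have h := Nat.le_pow_clog (b := 2) (by norm_num) (Fintype.card V)
  calc Fintype.card V ^ 2 ≤ (2 ^ Nat.clog 2 (Fintype.card V)) ^ 2 := Nat.pow_le_pow_left h 2
  _ = 2 ^ (2 * Nat.clog 2 (Fintype.card V)) := by rw [← pow_mul, mul_comm]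

lemma log_length_le (hn : 2 ≤ Fintype.card V) {i : Fin R.N} {q : R.G.Walk (R.src i) (R.dst i)}
    (hq : q ∈ R.strat i) :
    Nat.log 2 q.length ≤ 2 * Nat.clog 2 (Fintype.card V) := by
  have ht := R.strat_trail i q hq
  have hlen : q.length ≤ Fintype.card (Sym2 V) := by
    rw [← q.length_edges, ← List.toFinset_card_of_nodup ht.edges_nodup]
    exact Finset.card_le_univ _
  have h2 : q.length ≤ 2 ^ (2 * Nat.clog 2 (Fintype.card V)) :=
    le_trans hlen (le_trans (card_sym2_le (V := V)) (pow_two_clog hn))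
  calc Nat.log 2 q.length ≤ Nat.log 2 (2 ^ (2 * Nat.clog 2 (Fintype.card V))) :=
        Nat.log_mono_right h2
  _ = 2 * Nat.clog 2 (Fintype.card V) := Nat.log_pow (by norm_num) _

lemma length_le_of_bucket {j : Fin R.N} {b : ℕ} (hb : Nat.log 2 (p j).length = b)
    (hD : 2 ^ (b + 1) ≤ R.nD pstar + 1) : (p j).length ≤ R.nD pstar := by
  have := Nat.lt_pow_succ_log_self (b := 2) (by norm_num) (p j).length
  rw [hb] at this
  omega

end Aux2
section Aux3

variable (p pstar : R.Routing)

lemma one_le_nD : 1 ≤ R.nD pstar := by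
  have hj : (⟨0, R.Npos⟩ : Fin R.N) ∈ (Finset.univ : Finset (Fin R.N)) := Finset.mem_univ _
  exact le_trans (R.one_le_nLen pstar ⟨0, R.Npos⟩) (Finset.le_sup hj)

lemma one_le_nC (hstar : R.IsRouting pstar) : 1 ≤ R.nC pstar := by
  classical
  set j : Fin R.N := ⟨0, R.Npos⟩
  obtain ⟨e, he⟩ := R.walk_edges_toFinset_nonempty (R.strat_len j _ (hstar j))
  have h1 : 1 ≤ R.nCongB pstar (Nat.log 2 (pstar j).length) e := by
    unfold nCongB
    exact Finset.card_pos.mpr ⟨j, Finset.mem_filter.mpr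
      ⟨Finset.mem_univ _, List.mem_toFinset.mp he, rfl⟩⟩
  calc 1 ≤ R.nCong pstar j := le_trans h1 (R.nCongB_le_nCong pstar (List.mem_toFinset.mp he))
  _ ≤ R.nC pstar := Finset.le_sup (Finset.mem_univ j)

/-- The key spreading lemma: a set of players with high `nCong + nLen` in the Nash
routing spreads, via the Nash deviation to `pstar`, onto many edges of a single
(small) bucket, each still having high bucket congestion in `p`. -/
lemma spread (hp : R.NashSB p) (hstar : R.IsRouting pstar) (hn : 2 ≤ Fintype.card V)
    (P : Finset (Fin R.N)) (M s : ℕ)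
    (hP : ∀ j ∈ P, M ≤ R.nCong p j + R.nLen p j + s) :
    ∃ b' : ℕ, ∃ E' : Finset (Sym2 V),
      2 ^ (b' + 1) ≤ R.nD pstar + 1 ∧
      (∀ e ∈ E', M ≤ R.nCongB p b' e + 2 ^ (b' + 1) + s) ∧
      P.card ≤ R.nC pstar * ((2 * Nat.clog 2 (Fintype.card V) + 1) * E'.card) := by
  classical
  choose F hFmem hFle using R.exists_deviation_edge p pstar hp hstar
  set lg := Nat.clog 2 (Fintype.card V) with hlg
  set Gf : Fin R.N → Sym2 V × ℕ := fun j => (F j, Nat.log 2 (pstar j).length) with hGf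
  set T := P.image Gf with hT
  -- fibers of the map have size at most nC pstar
  have hfib : ∀ a ∈ T, (P.filter fun j => Gf j = a).card ≤ R.nC pstar := by
    intro a _
    rcases (P.filter fun j => Gf j = a).eq_empty_or_nonempty with h | ⟨j₀, hj₀⟩
    · rw [h]; simp
    · have hj₀' := Finset.mem_filter.mp hj₀
      have ha1 : F j₀ = a.1 := congrArg Prod.fst hj₀'.2
      have ha2 : Nat.log 2 (pstar j₀).length = a.2 := congrArg Prod.snd hj₀'.2
      have hsub : (P.filter fun j => Gf j = a) ⊆
          Finset.univ.filter fun k => a.1 ∈ (pstar k).edges ∧ Nat.log 2 (pstar k).length = a.2 := by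
        intro k hk
        have hk' := Finset.mem_filter.mp hk
        have hk1 : F k = a.1 := congrArg Prod.fst hk'.2
        have hk2 : Nat.log 2 (pstar k).length = a.2 := congrArg Prod.snd hk'.2
        exact Finset.mem_filter.mpr ⟨Finset.mem_univ k, hk1 ▸ hFmem k, hk2⟩
      calc (P.filter fun j => Gf j = a).card ≤ R.nCongB pstar a.2 a.1 :=
            Finset.card_le_card hsub
      _ ≤ R.nCong pstar j₀ := by
            rw [← ha1, ← ha2]
            exact R.nCongB_le_nCong pstar (hFmem j₀)
      _ ≤ R.nC pstar := Finset.le_sup (Finset.mem_univ j₀)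
  have h1 : P.card ≤ R.nC pstar * T.card := Finset.card_le_mul_card_image P _ hfib
  -- second coordinates lie in range (2 * lg + 1)
  have hsnd : ∀ a ∈ T, a.2 ∈ Finset.range (2 * lg + 1) := by
    intro a ha
    obtain ⟨j, _, rfl⟩ := Finset.mem_image.mp ha
    simp only [Finset.mem_range]
    have := R.log_length_le hn (hstar j)
    exact Nat.lt_succ_of_le this
  have h2 : T.card = ∑ b ∈ Finset.range (2 * lg + 1), (T.filter fun a => a.2 = b).card :=
    Finset.card_eq_sum_card_fiberwise hsnd
  obtain ⟨b', hb'mem, hb'⟩ := Finset.exists_mem_eq_sup (Finset.range (2 * lg + 1))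
    ⟨0, Finset.mem_range.mpr (by omega)⟩ (fun b => (T.filter fun a => a.2 = b).card)
  have h3 : T.card ≤ (2 * lg + 1) * (T.filter fun a => a.2 = b').card := by
    rw [h2, ← hb']
    calc ∑ b ∈ Finset.range (2 * lg + 1), (T.filter fun a => a.2 = b).card
        ≤ (Finset.range (2 * lg + 1)).card •
          ((Finset.range (2 * lg + 1)).sup fun b => (T.filter fun a => a.2 = b).card) :=
          Finset.sum_le_card_nsmul _ _ _
            (fun b hb => Finset.le_sup (f := fun b => (T.filter fun a => a.2 = b).card) hb)
    _ = (2 * lg + 1) * _ := by rw [Finset.card_range, smul_eq_mul]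
  set Tf := T.filter fun a => a.2 = b' with hTf
  set E' := Tf.image Prod.fst with hE'
  have h4 : E'.card = Tf.card := by
    rw [hE']
    apply Finset.card_image_of_injOn
    intro a ha c hc hac
    have ha2 := (Finset.mem_filter.mp ha).2
    have hc2 := (Finset.mem_filter.mp hc).2
    exact Prod.ext hac (ha2.trans hc2.symm)
  -- membership facts for E'
  have hmem : ∀ e ∈ E', ∃ j ∈ P, F j = e ∧ Nat.log 2 (pstar j).length = b' := by
    intro e he
    obtain ⟨a, ha, rfl⟩ := Finset.mem_image.mp he
    have ha' := Finset.mem_filter.mp ha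
    obtain ⟨j, hj, rfl⟩ := Finset.mem_image.mp ha'.1
    exact ⟨j, hj, rfl, ha'.2⟩
  rcases E'.eq_empty_or_nonempty with hE'e | ⟨e₀, he₀⟩
  · -- degenerate case: no edges; then P is empty, use bucket 0
    refine ⟨0, ∅, ?_, by simp, ?_⟩
    · have := R.one_le_nD pstar; omega
    · have hTf0 : Tf.card = 0 := by rw [← h4, hE'e]; simp
      have hT0 : T.card = 0 := Nat.le_zero.mp (by simpa [hTf0] using h3)
      simp only [Finset.card_empty, Nat.mul_zero]
      have h5 := h1
      rw [hT0, Nat.mul_zero] at h5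
      exact h5
  · refine ⟨b', E', ?_, ?_, ?_⟩
    · obtain ⟨j, _, _, hj2⟩ := hmem e₀ he₀
      rw [← hj2]
      exact R.pow_bucket_le pstar j
    · intro e he
      obtain ⟨j, hjP, rfl, hj2⟩ := hmem e he
      have hA := hFle j
      have hB := hP j hjP
      rw [hj2] at hA
      omega
    · calc P.card ≤ R.nC pstar * T.card := h1
      _ ≤ R.nC pstar * ((2 * lg + 1) * Tf.card) := Nat.mul_le_mul_left _ h3
      _ = R.nC pstar * ((2 * lg + 1) * E'.card) := by rw [h4]

end Aux3
section Aux4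

variable (p : R.Routing)

/-- Double counting: if every edge of `E` has bucket-`b` congestion at least `K`,
and every bucket-`b` path has length at most `D`, then the set of bucket-`b`
players touching `E` is large. -/
lemma count_lemma (b : ℕ) (E : Finset (Sym2 V)) (K D : ℕ)
    (hK : ∀ e ∈ E, K ≤ R.nCongB p b e)
    (hlen : ∀ j : Fin R.N, Nat.log 2 (p j).length = b → (p j).length ≤ D) :
    E.card * K ≤
      (Finset.univ.filter fun j : Fin R.N =>
        Nat.log 2 (p j).length = b ∧ ∃ e ∈ E, e ∈ (p j).edges).card * D := by
  classical
  set P := Finset.univ.filter fun j : Fin R.N =>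
    Nat.log 2 (p j).length = b ∧ ∃ e ∈ E, e ∈ (p j).edges with hPdef
  have hstep1 : ∀ e ∈ E, R.nCongB p b e = (P.filter fun j => e ∈ (p j).edges).card := by
    intro e he
    unfold nCongB
    congr 1
    ext j
    simp only [Finset.mem_filter, Finset.mem_univ, true_and, hPdef]
    constructor
    · rintro ⟨h1, h2⟩
      exact ⟨⟨h2, e, he, h1⟩, h1⟩
    · rintro ⟨⟨h2, _⟩, h1⟩
      exact ⟨h1, h2⟩
  have hswap : ∑ e ∈ E, (P.filter fun j => e ∈ (p j).edges).card
      = ∑ j ∈ P, (E.filter fun e => e ∈ (p j).edges).card := by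
    simp_rw [Finset.card_filter]
    exact Finset.sum_comm
  have hup : ∀ j ∈ P, (E.filter fun e => e ∈ (p j).edges).card ≤ D := by
    intro j hj
    have hjb : Nat.log 2 (p j).length = b := (Finset.mem_filter.mp hj).2.1
    have hsub : (E.filter fun e => e ∈ (p j).edges) ⊆ (p j).edges.toFinset := by
      intro e he
      exact List.mem_toFinset.mpr (Finset.mem_filter.mp he).2
    calc (E.filter fun e => e ∈ (p j).edges).card ≤ (p j).edges.toFinset.card :=
          Finset.card_le_card hsub
    _ ≤ (p j).edges.length := (p j).edges.toFinset_card_le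
    _ = (p j).length := (p j).length_edges
    _ ≤ D := hlen j hjb
  calc E.card * K = E.card • K := by rw [smul_eq_mul]
  _ ≤ ∑ e ∈ E, R.nCongB p b e := Finset.card_nsmul_le_sum _ _ _ hK
  _ = ∑ e ∈ E, (P.filter fun j => e ∈ (p j).edges).card := Finset.sum_congr rfl hstep1
  _ = ∑ j ∈ P, (E.filter fun e => e ∈ (p j).edges).card := hswap
  _ ≤ ∑ _j ∈ P, D := Finset.sum_le_sum hup
  _ = P.card * D := by rw [Finset.sum_const, smul_eq_mul]

end Aux4

/-- Let `p` be a Nash-routing of a sum-bucket game on a graph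
with `n ≥ 2` vertices, and let `p*` be any routing with `C̄* = C̄(p*)` and
`D̄* = D̄(p*)`.  Then `C̄(p) ≤ 18 · C̄* · D̄* · ⌈log₂ n⌉²`. -/
theorem sum_bucket_congestion_upper_bound (R : RoutingGame V)
    (p pstar : R.Routing) (hp : R.NashSB p) (hstar : R.IsRouting pstar)
    (hn : 2 ≤ Fintype.card V) :
    R.nC p ≤ 18 * R.nC pstar * R.nD pstar *
      (Nat.clog 2 (Fintype.card V)) ^ 2 := by
  classical
  by_contra hCC
  push_neg at hCC
  set lg := Nat.clog 2 (Fintype.card V) with hlgdef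
  set A := R.nC pstar with hAdef
  set D := R.nD pstar with hDdef
  set C := R.nC p with hCdef
  have hA : 1 ≤ A := R.one_le_nC pstar hstar
  have hD : 1 ≤ D := R.one_le_nD pstar
  have hlg : 1 ≤ lg := Nat.clog_pos (by norm_num) hn
  have hlgsq : 1 ≤ lg ^ 2 := Nat.one_le_pow _ _ (by omega)
  have hC1 : 0 < C := lt_of_le_of_lt (Nat.zero_le _) hCC
  -- the atom X = A * D * lg ^ 2 and comparisons used by omega later
  have hX : 18 * (A * D * lg ^ 2) < C := by
    have : 18 * A * D * lg ^ 2 = 18 * (A * D * lg ^ 2) := by ring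
    omega
  -- a player and an edge realizing the congestion C
  obtain ⟨i0, _, hi0⟩ := Finset.exists_mem_eq_sup (Finset.univ : Finset (Fin R.N))
    ⟨⟨0, R.Npos⟩, Finset.mem_univ _⟩ (R.nCong p)
  have hi0' : C = R.nCong p i0 := hi0
  set b0 := Nat.log 2 (p i0).length with hb0def
  have hne0 : (p i0).edges.toFinset.Nonempty :=
    R.walk_edges_toFinset_nonempty (R.strat_len i0 _ (hp.1 i0))
  obtain ⟨e0, he0m, he0⟩ := Finset.exists_mem_eq_sup _ hne0 (R.nCongB p b0)
  have hC0 : R.nCongB p b0 e0 = C := by rw [hi0']; exact he0.symm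
  -- the key induction
  have key : ∀ s : ℕ, 1 ≤ s → s ≤ 2 * lg + 1 → ∃ b : ℕ, ∃ E : Finset (Sym2 V),
      2 ^ (b + 1) ≤ D + 1 ∧ (∀ e ∈ E, C + 2 ≤ R.nCongB p b e + 2 ^ (b + 1) + s) ∧
      2 ^ s ≤ E.card := by
    intro s
    induction s with
    | zero => omega
    | succ s ih =>
      intro _ hs
      by_cases hs0 : s = 0
      · -- base case s + 1 = 1
        subst hs0
        set P0 := Finset.univ.filter fun j : Fin R.N =>
          e0 ∈ (p j).edges ∧ Nat.log 2 (p j).length = b0 with hP0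
        have hP0card : P0.card = C := hC0
        have hPlayers : ∀ j ∈ P0, C + 2 ≤ R.nCong p j + R.nLen p j + 1 := by
          intro j hj
          obtain ⟨he, hb⟩ := (Finset.mem_filter.mp hj).2
          have h1 : R.nCongB p b0 e0 ≤ R.nCong p j := by
            rw [← hb]
            exact R.nCongB_le_nCong p he
          have h2 := R.one_le_nLen p j
          omega
        obtain ⟨b1, E1, hb1, hE1, hcard1⟩ := R.spread p pstar hp hstar hn P0 (C + 2) 1 hPlayers
        refine ⟨b1, E1, hb1, hE1, ?_⟩
        by_contra hlt
        push_neg at hlt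
        have h5 : C ≤ A * ((2 * lg + 1) * E1.card) := hP0card ▸ hcard1
        have h6 : A * ((2 * lg + 1) * E1.card) ≤ A * ((2 * lg + 1) * 1) := by
          apply Nat.mul_le_mul_left
          apply Nat.mul_le_mul_left
          omega
        have hG3 : A * lg ≤ A * D * lg ^ 2 := by
          calc A * lg = A * 1 * lg := by ring
          _ ≤ A * D * lg ^ 2 :=
            Nat.mul_le_mul (Nat.mul_le_mul le_rfl hD) (Nat.le_self_pow (by norm_num) lg)
        have hG1 : A ≤ A * D * lg ^ 2 := by
          calc A = A * 1 * 1 := by ring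
          _ ≤ A * D * lg ^ 2 := Nat.mul_le_mul (Nat.mul_le_mul le_rfl hD) hlgsq
        have h7 : A * ((2 * lg + 1) * 1) = 2 * (A * lg) + A := by ring
        omega
      · -- inductive step, 1 ≤ s ≤ 2 * lg
        obtain ⟨b, E, hb, hE, hcard⟩ := ih (by omega) (by omega)
        have hpow : 2 ≤ 2 ^ (b + 1) := by
          have h := Nat.one_le_two_pow (n := b)
          have : 2 ^ (b + 1) = 2 * 2 ^ b := by ring
          omega
        have hKe : ∀ e ∈ E, C + 2 - (2 ^ (b + 1) + s) ≤ R.nCongB p b e := by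
          intro e he
          have := hE e he
          omega
        have hlenb : ∀ j : Fin R.N, Nat.log 2 (p j).length = b → (p j).length ≤ D :=
          fun j hj => R.length_le_of_bucket p pstar hj hb
        have hcount := R.count_lemma p b E (C + 2 - (2 ^ (b + 1) + s)) D hKe hlenb
        set P := Finset.univ.filter fun j : Fin R.N =>
          Nat.log 2 (p j).length = b ∧ ∃ e ∈ E, e ∈ (p j).edges with hPdef
        have hPlayers : ∀ j ∈ P, C + 2 ≤ R.nCong p j + R.nLen p j + (s + 1) := by
          intro j hj
          obtain ⟨hjb, e, heE, hje⟩ := (Finset.mem_filter.mp hj).2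
          have h1 : R.nCongB p b e ≤ R.nCong p j := by
            rw [← hjb]
            exact R.nCongB_le_nCong p hje
          have h2 := hE e heE
          have h3 : R.nLen p j + 1 = 2 ^ (b + 1) := by
            rw [← hjb]
            exact R.nLen_add_one p j
          omega
        obtain ⟨b', E', hb', hE', hsp⟩ := R.spread p pstar hp hstar hn P (C + 2) (s + 1) hPlayers
        refine ⟨b', E', hb', hE', ?_⟩
        by_contra hlt
        push_neg at hlt
        have hEc : 1 ≤ E.card := le_trans Nat.one_le_two_pow hcard
        have hE2 : E'.card ≤ 2 * E.card := by
          have h2s : 2 ^ (s + 1) ≤ 2 * E.card := by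
            have : 2 ^ (s + 1) = 2 * 2 ^ s := by ring
            omega
          omega
        -- chain of counting inequalities
        have hchain : E.card * (C + 2 - (2 ^ (b + 1) + s)) ≤ A * ((2 * lg + 1) * E'.card) * D :=
          le_trans hcount (Nat.mul_le_mul_right D hsp)
        have hrhs : A * ((2 * lg + 1) * E'.card) * D ≤ (2 * A * (2 * lg + 1) * D) * E.card := by
          calc A * ((2 * lg + 1) * E'.card) * D ≤ A * ((2 * lg + 1) * (2 * E.card)) * D := by
                apply Nat.mul_le_mul_right
                apply Nat.mul_le_mul_left
                apply Nat.mul_le_mul_left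
                exact hE2
          _ = (2 * A * (2 * lg + 1) * D) * E.card := by ring
        have hcancel : C + 2 - (2 ^ (b + 1) + s) ≤ 2 * A * (2 * lg + 1) * D := by
          have h := le_trans hchain hrhs
          have h' : (C + 2 - (2 ^ (b + 1) + s)) * E.card ≤ (2 * A * (2 * lg + 1) * D) * E.card := by
            rw [mul_comm] at h
            exact h
          exact Nat.le_of_mul_le_mul_right h' (by omega)
        -- final numeric contradiction
        have hG5 : A * D * lg ≤ A * D * lg ^ 2 := by
          calc A * D * lg = A * D * (lg * 1) := by ring
          _ ≤ A * D * (lg * lg) := Nat.mul_le_mul_left _ (Nat.mul_le_mul_left _ hlg)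
          _ = A * D * lg ^ 2 := by ring
        have hG4 : A * D ≤ A * D * lg ^ 2 := by
          calc A * D = A * D * 1 := by ring
          _ ≤ A * D * lg ^ 2 := Nat.mul_le_mul_left _ hlgsq
        have hG2 : D ≤ A * D * lg ^ 2 := by
          calc D = 1 * D * 1 := by ring
          _ ≤ A * D * lg ^ 2 := Nat.mul_le_mul (Nat.mul_le_mul hA le_rfl) hlgsq
        have hG6 : lg ≤ A * D * lg ^ 2 := by
          calc lg = 1 * 1 * lg := by ring
          _ ≤ A * D * lg ^ 2 :=
            Nat.mul_le_mul (Nat.mul_le_mul hA hD) (Nat.le_self_pow (by norm_num) lg)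
        have hexp : 2 * A * (2 * lg + 1) * D = 4 * (A * D * lg) + 2 * (A * D) := by ring
        omega
  -- conclusion: too many edges
  obtain ⟨b, E, _, _, hEcard⟩ := key (2 * lg + 1) (by omega) le_rfl
  have h1 : E.card ≤ Fintype.card (Sym2 V) := Finset.card_le_univ E
  have h2 := card_sym2_le (V := V)
  have h3 : Fintype.card V ^ 2 ≤ 2 ^ (2 * lg) := pow_two_clog (V := V) hn
  have h4 : 2 ^ (2 * lg + 1) = 2 * 2 ^ (2 * lg) := by ring
  have h5 : 1 ≤ 2 ^ (2 * lg) := Nat.one_le_two_pow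
  omega

end RoutingGame
end
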